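/- arXiv:1901.01117 — 12 statements merged into one kernel-verified Lean document; each statement's English description precedes it below -/
import Mathlib

section
/- Let F be a coherent (κ⁺,X,μ)-forest that is closed under modifications at fewer than κ points. Then two functions f, g ∈ F have a common extension in F if and only if f and g agree on dom(f) ∩ dom(g). -/
open Cardinal Set
open scoped Classical

universe u v

namespace ForestPaper

variable {X : Type u} {μ : Type v}

/-- The domain of a partial function represented as an `Option`-valued function. -/
def pdom (f : X → Option μ) : Set X := {x | f x ≠ none}

/-- The range of a partial function. -/
def pran (f : X → Option μ) : Set μ := {y | ∃ x, f x = some y}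

/-- `Ext g f` means the partial function `g` extends `f`. -/
def Ext (g f : X → Option μ) : Prop := ∀ x, f x ≠ none → g x = f x

/-- Restriction of a partial function to a set. -/
noncomputable def pres (f : X → Option μ) (z : Set X) : X → Option μ :=
  fun x => if x ∈ z then f x else none

/-- The set of points of the common domain where `f` and `g` disagree. -/
def pdiff (f g : X → Option μ) : Set X :=
  {x | f x ≠ none ∧ g x ≠ none ∧ f x ≠ g x}

/-- `f` and `g` agree on their common domain. -/
def Agree (f g : X → Option μ) : Prop :=
  ∀ x, f x ≠ none → g x ≠ none → f x = g x

/-- Two members of `F` are compatible if they have a common extension in `F`. -/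
def Compat (F : Set (X → Option μ)) (f g : X → Option μ) : Prop :=
  ∃ h ∈ F, Ext h f ∧ Ext h g

/-- `A` is an antichain in `F`: a pairwise incompatible subset of `F`. -/
def IsAntichainIn (F A : Set (X → Option μ)) : Prop :=
  A ⊆ F ∧ ∀ f ∈ A, ∀ g ∈ A, f ≠ g → ¬ Compat F f g

/-- `A` is a maximal antichain in `F`. -/
def IsMaxAntichainIn (F A : Set (X → Option μ)) : Prop :=
  IsAntichainIn F A ∧ ∀ f ∈ F, ∃ g ∈ A, Compat F f g

/-- A `(c, X, μ)`-forest: a collection of partial functions from `X` to `μ` whose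
domains are exactly the subsets of `X` of size `< c`, with coherent restrictions
between levels (every restriction of a member is a member, and every member
extends to any larger admissible domain). -/
structure IsForest (c : Cardinal.{u}) (F : Set (X → Option μ)) : Prop where
  dom_small : ∀ f ∈ F, #(pdom f) < c
  exists_dom : ∀ z : Set X, #z < c → ∃ f ∈ F, pdom f = z
  restrict_mem : ∀ f ∈ F, ∀ z : Set X, z ⊆ pdom f → pres f z ∈ F
  extend_mem : ∀ f ∈ F, ∀ z : Set X, #z < c → pdom f ⊆ z →
    ∃ g ∈ F, pdom g = z ∧ Ext g f

/-- A family is `κ`-coherent when any two members disagree at `< κ` many points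
of their common domain. -/
def Coherent (κ : Cardinal.{u}) (F : Set (X → Option μ)) : Prop :=
  ∀ f ∈ F, ∀ g ∈ F, #(pdiff f g) < κ

/-- `F` is closed under modifications at `< κ` many points. -/
def ClosedMod (κ : Cardinal.{u}) (F : Set (X → Option μ)) : Prop :=
  ∀ f ∈ F, ∀ f' : X → Option μ, pdom f' = pdom f →
    #{x | f x ≠ f' x} < κ → f' ∈ F

/-- A partial function is injective (on its domain). -/
def PInj (f : X → Option μ) : Prop :=
  ∀ x y, f x ≠ none → f x = f y → x = y

/-- A partial function is `< κ`-to-1: every fiber has size `< κ`. -/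
def SmallTo1 (κ : Cardinal.{u}) (f : X → Option μ) : Prop :=
  ∀ y : μ, #{x | f x = some y} < κ

/-- `F` contains a `⊆`-well-ordered chain of order type `o`. -/
def HasChain (o : Ordinal.{u}) (F : Set (X → Option μ)) : Prop :=
  ∃ c : o.ToType → (X → Option μ), (∀ i, c i ∈ F) ∧
    ∀ i j, i < j → Ext (c j) (c i) ∧ c i ≠ c j

/-- In a coherent `(κ⁺,X,μ)`-forest closed under `< κ` modifications, two members
have a common extension in the forest iff they agree on their common domain. -/
theorem stmt1 {X μ : Type u} (κ : Cardinal.{u}) (hκ : ℵ₀ ≤ κ)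
    (F : Set (X → Option μ)) (hF : IsForest (Order.succ κ) F)
    (hcoh : Coherent κ F) (hmod : ClosedMod κ F)
    (f : X → Option μ) (hf : f ∈ F) (g : X → Option μ) (hg : g ∈ F) :
    (∃ h ∈ F, Ext h f ∧ Ext h g) ↔ Agree f g := by
  constructor
  · rintro ⟨h, hh, hhf, hhg⟩
    intro x hfx hgx
    rw [← hhf x hfx, ← hhg x hgx]
  · intro hag
    have hz : #(pdom f ∪ pdom g : Set X) < Order.succ κ := by
      rw [Order.lt_succ_iff]
      calc #(pdom f ∪ pdom g : Set X) ≤ #(pdom f) + #(pdom g) := mk_union_le _ _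
        _ ≤ κ + κ := by
            gcongr
            · exact Order.lt_succ_iff.mp (hF.dom_small f hf)
            · exact Order.lt_succ_iff.mp (hF.dom_small g hg)
        _ = κ := add_eq_self hκ
    obtain ⟨h, hh, hdom, hext⟩ := hF.extend_mem f hf (pdom f ∪ pdom g) hz
      (subset_union_left)
    set h' : X → Option μ := fun x => if g x ≠ none then g x else h x with hh'def
    have hdiff : {x | h x ≠ h' x} ⊆ pdiff h g := by
      intro x hx
      simp only [mem_setOf_eq, hh'def] at hx
      by_cases hgx : g x = none
      · simp [hgx] at hx
      · refine ⟨?_, hgx, ?_⟩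
        · have : x ∈ pdom h := by
            rw [hdom]; exact Or.inr hgx
          exact this
        · simpa [hgx] using hx
    have hdomeq : pdom h' = pdom h := by
      ext x
      simp only [pdom, mem_setOf_eq, hh'def]
      by_cases hgx : g x = none
      · simp [hgx]
      · have : x ∈ pdom h := by rw [hdom]; exact Or.inr hgx
        simp [hgx]
        exact this
    have hh' : h' ∈ F := hmod h hh h' hdomeq
      (lt_of_le_of_lt (mk_le_mk_of_subset hdiff) (hcoh h hh g hg))
    refine ⟨h', hh', ?_, ?_⟩
    · intro x hfx
      by_cases hgx : g x = none
      · simp only [hh'def, hgx, ne_eq, not_true_eq_false, if_false]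
        exact hext x hfx
      · simp only [hh'def, hgx, ne_eq, not_false_eq_true, if_true]
        exact (hag x hfx hgx).symm
    · intro x hgx
      simp [hh'def, hgx]
end ForestPaper
end

section
/- Let κ be a regular cardinal and let F = {f_α : α < κ} be a κ-coherent family of partial functions from κ to μ. Then there exists a total function f : κ → μ such that {f} ∪ F is κ-coherent, i.e., f disagrees with each f_α at fewer than κ points of dom(f_α). -/
open Cardinal Set
open scoped Classical

universe u v

namespace ForestPaper

variable {X : Type u} {μ : Type v}

/-- For `κ` regular and a `κ`-coherent family `⟨f_α : α < κ⟩` of partial functions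
from `κ` to `μ`, there is a total function `f : κ → μ` cohering with every `f_α`. -/
theorem stmt2 (κ : Cardinal.{u}) (hκ : κ.IsRegular) {μ : Type u} [Nonempty μ]
    (F : κ.ord.ToType → (κ.ord.ToType → Option μ))
    (hcoh : ∀ α β, #(pdiff (F α) (F β)) < κ) :
    ∃ f : κ.ord.ToType → μ, ∀ α,
      #{x | F α x ≠ none ∧ F α x ≠ some (f x)} < κ := by
  classical
  inhabit μ
  -- least index with x in domain
  have key : ∀ x , (∃ β, F β x ≠ none) → ∃ β, F β x ≠ none ∧ ∀ γ, F γ x ≠ none → β ≤ γ := by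
    intro x hx
    obtain ⟨β, hβ, hmin⟩ := wellFounded_lt.has_min {β | F β x ≠ none} hx
    exact ⟨β, hβ, fun γ hγ => not_lt.1 (hmin γ hγ)⟩
  choose ix hix1 hix2 using key
  refine ⟨fun x => if h : ∃ β, F β x ≠ none then (F (ix x h) x).getD default else default, ?_⟩
  intro α
  have hsub : {x | F α x ≠ none ∧ F α x ≠ some
      (if h : ∃ β, F β x ≠ none then (F (ix x h) x).getD default else default)} ⊆
      ⋃ β : Iic α, pdiff (F β) (F α) := by
    intro x ⟨h1, h2⟩
    have hex : ∃ β, F β x ≠ none := ⟨α, h1⟩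
    have hnx : F (ix x hex) x ≠ none := hix1 x hex
    have hle : ix x hex ≤ α := hix2 x hex α h1
    rw [dif_pos hex] at h2
    obtain ⟨y, hy⟩ := Option.ne_none_iff_exists'.1 hnx
    refine mem_iUnion.2 ⟨⟨ix x hex, hle⟩, hnx, h1, ?_⟩
    rw [hy]; rw [hy] at h2; simpa using fun e => h2 e.symm
  have hbig : #(⋃ β : Iic α, pdiff (F β) (F α)) < κ := by
    refine (mk_iUnion_le _).trans_lt ?_
    have h1 : #(Iic α) < κ := by
      have h2 : #(Iio α) < κ := Cardinal.mk_Iio_ord_toType α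
      have : (Iic α) ⊆ insert α (Iio α) := by
        intro b hb; rcases lt_or_eq_of_le (mem_Iic.1 hb) with h | h
        · exact Or.inr h
        · exact Or.inl h
      calc #(Iic α) ≤ #(insert α (Iio α) : Set _) := mk_le_mk_of_subset this
        _ ≤ #(Iio α) + 1 := mk_insert_le
        _ < κ := by
          rcases lt_or_ge (#(Iio α)) ℵ₀ with h | h
          · exact lt_of_lt_of_le (by exact (add_lt_aleph0 h one_lt_aleph0).trans_le le_rfl) hκ.aleph0_le
          · rwa [add_one_eq h]
    refine mul_lt_of_lt hκ.aleph0_le h1 ?_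
    exact iSup_lt_of_isRegular hκ h1 fun i => hcoh _ _

  exact lt_of_le_of_lt (mk_le_mk_of_subset hsub) hbig
end ForestPaper
end

section
/- Let κ be a regular cardinal and let F = {f_α : α < κ} be a κ-coherent family of partial functions from κ to κ, each of which is < κ-to-1 (every fiber has size < κ). Then there exists a total function f : κ → κ which is < κ-to-1 and such that {f} ∪ F is κ-coherent. -/
open Cardinal Set
open scoped Classical

universe u v

namespace ForestPaper

variable {X : Type u} {μ : Type v}

/-- For `κ` regular and a `κ`-coherent family `⟨f_α : α < κ⟩` of `< κ`-to-1
partial functions from `κ` to `κ`, there is a total `< κ`-to-1 function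
`f : κ → κ` cohering with every `f_α`. -/
theorem stmt3 (κ : Cardinal.{u}) (hκ : κ.IsRegular)
    (F : κ.ord.ToType → (κ.ord.ToType → Option κ.ord.ToType))
    (hcoh : ∀ α β, #(pdiff (F α) (F β)) < κ)
    (hto1 : ∀ α, SmallTo1 κ (F α)) :
    ∃ f : κ.ord.ToType → κ.ord.ToType,
      (∀ y, #(f ⁻¹' {y}) < κ) ∧
      ∀ α, #{x | F α x ≠ none ∧ F α x ≠ some (f x)} < κ := by
  classical
  haveI : IsWellOrder κ.ord.ToType (· < ·) := isWellOrder_lt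
  have hω : ℵ₀ ≤ κ := hκ.aleph0_le
  -- initial segments are small
  have hA : ∀ x : κ.ord.ToType, #(Set.Iio x) < κ := by
    intro x
    have h1 : #(Set.Iio x) =
        (Ordinal.typein ((· < ·) : κ.ord.ToType → κ.ord.ToType → Prop) x).card :=
      Ordinal.card_typein (r := ((· < ·) : κ.ord.ToType → κ.ord.ToType → Prop)) x
    rw [h1, ← Cardinal.lt_ord]
    have := Ordinal.typein_lt_type ((· < ·) : κ.ord.ToType → κ.ord.ToType → Prop) x
    rwa [Ordinal.type_toType] at this
  have hAc : ∀ x : κ.ord.ToType, #(Set.Iic x) < κ := by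
    intro x
    rw [← Set.Iio_union_right]
    refine lt_of_le_of_lt (Cardinal.mk_union_le _ _) ?_
    exact Cardinal.add_lt_of_lt hω (hA x) (by simpa using Cardinal.one_lt_aleph0.trans_le hω)
  -- small sets are bounded
  have hB : ∀ S : Set κ.ord.ToType, #S < κ → ∃ b, ∀ s ∈ S, s < b := by
    intro S hS
    have h2 : #S < (Ordinal.type ((· < ·) : κ.ord.ToType → κ.ord.ToType → Prop)).cof := by
      rwa [Ordinal.type_toType, hκ.cof_eq]
    by_contra hcon
    push_neg at hcon
    have hcf : IsCofinal S := hcon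
    have h3 : #S < Order.cof κ.ord.ToType := by rw [← Ordinal.cof_type]; exact h2
    exact absurd (Order.cof_le hcf) (not_le.mpr h3)
  -- the capping function
  have hU : ∀ y : κ.ord.ToType, #(⋃ γ ∈ Set.Iic y, {x | F γ x = some y}) < κ := by
    intro y
    exact (Cardinal.card_biUnion_lt_iff_forall_of_isRegular hκ (hAc y)).mpr
      (fun γ _ => hto1 γ y)
  choose c hc using fun y => hB _ (hU y)
  have wf : WellFounded ((· < ·) : κ.ord.ToType → κ.ord.ToType → Prop) := IsWellFounded.wf
  set S : κ.ord.ToType → Set κ.ord.ToType := fun x => {β | β ≤ x ∧ F β x ≠ none} with hS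
  set f : κ.ord.ToType → κ.ord.ToType := fun x =>
    if hx : (S x).Nonempty then
      (F (wf.min (S x) hx) x).elim x (fun v => if x < c v then v else x)
    else x with hf
  refine ⟨f, ?_, ?_⟩
  · -- fibers small
    intro y
    have hsub : f ⁻¹' {y} ⊆ Set.Iio (c y) ∪ {y} := by
      intro x hx
      simp only [Set.mem_preimage, Set.mem_singleton_iff, hf] at hx
      by_cases hne : (S x).Nonempty
      · rw [dif_pos hne] at hx
        rcases hO : F (wf.min (S x) hne) x with _ | v
        · rw [hO] at hx
          simp only [Option.elim] at hx
          exact Or.inr (by simp [hx])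
        · rw [hO] at hx
          simp only [Option.elim] at hx
          by_cases hlt : x < c v
          · rw [if_pos hlt] at hx
            subst hx
            exact Or.inl hlt
          · rw [if_neg hlt] at hx
            exact Or.inr (by simp [hx])
      · rw [dif_neg hne] at hx
        exact Or.inr (by simp [hx])
    refine lt_of_le_of_lt (Cardinal.mk_le_mk_of_subset hsub) ?_
    refine lt_of_le_of_lt (Cardinal.mk_union_le _ _) ?_
    exact Cardinal.add_lt_of_lt hω (hA _) (by simpa using Cardinal.one_lt_aleph0.trans_le hω)
  · -- coherence
    intro α
    have hsub : {x | F α x ≠ none ∧ F α x ≠ some (f x)} ⊆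
        Set.Iio α ∪ ((⋃ β ∈ Set.Iic α, pdiff (F α) (F β)) ∪
          (⋃ y ∈ Set.Iio α, {x | F α x = some y})) := by
      rintro x ⟨hd, hne⟩
      by_cases hxα : x < α
      · exact Or.inl hxα
      right
      have hαx : α ≤ x := le_of_not_gt hxα
      have hmemS : α ∈ S x := ⟨hαx, hd⟩
      have hne' : (S x).Nonempty := ⟨α, hmemS⟩
      have hβ₀ := wf.min_mem (S x) hne'
      set β₀ := wf.min (S x) hne' with hβ₀def
      obtain ⟨hβ₀x, hβ₀d⟩ := hβ₀
      have hβ₀α : β₀ ≤ α := not_lt.mp (wf.not_lt_min (S x) hmemS)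
      obtain ⟨v, hv⟩ : ∃ v, F β₀ x = some v := Option.ne_none_iff_exists'.mp hβ₀d
      by_cases heq : F α x = F β₀ x
      · have hav : F α x = some v := heq.trans hv
        by_cases hlt : x < c v
        · exfalso
          apply hne
          have hfx : f x = v := by
            rw [hf]
            simp only
            rw [dif_pos hne', ← hβ₀def, hv]
            simp only [Option.elim]
            rw [if_pos hlt]
          rw [hfx]
          exact hav
        · have hvα : v < α := by
            by_contra hge
            have hαv : α ≤ v := le_of_not_gt hge
            have hxU : x ∈ ⋃ γ ∈ Set.Iic v, {x | F γ x = some v} :=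
              Set.mem_biUnion hαv hav
            exact hlt (hc v x hxU)
          exact Or.inr (Set.mem_biUnion hvα hav)
      · exact Or.inl (Set.mem_biUnion hβ₀α ⟨hd, hβ₀d, heq⟩)
    refine lt_of_le_of_lt (Cardinal.mk_le_mk_of_subset hsub) ?_
    refine lt_of_le_of_lt (Cardinal.mk_union_le _ _) ?_
    refine Cardinal.add_lt_of_lt hω (hA α) ?_
    refine lt_of_le_of_lt (Cardinal.mk_union_le _ _) ?_
    refine Cardinal.add_lt_of_lt hω ?_ ?_
    · exact (Cardinal.card_biUnion_lt_iff_forall_of_isRegular hκ (hAc α)).mpr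
        (fun β _ => hcoh α β)
    · exact (Cardinal.card_biUnion_lt_iff_forall_of_isRegular hκ (hA α)).mpr
        (fun y _ => hto1 α y)
end ForestPaper
end

section
/- If F is a coherent (κ⁺,X,μ)-forest closed under finite modifications with μ ≥ 2, and F contains a well-ordered ⊆-chain of order type κ⁺, then F contains an antichain of cardinality κ⁺. In particular, such an F is Suslin only if it is Aronszajn. -/
open Cardinal Set
open scoped Classical

universe u v

namespace ForestPaper

variable {X : Type u} {μ : Type v}

/-- If a coherent `(κ⁺,X,μ)`-forest with `μ ≥ 2`, closed under finite
modifications, contains a well-ordered `⊆`-chain of order type `κ⁺`, then it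
contains an antichain of size `κ⁺` (so such a forest is Suslin only if it is
Aronszajn). -/
theorem stmt5 {X μ : Type u} [Nontrivial μ] (κ : Cardinal.{u}) (hκ : ℵ₀ ≤ κ)
    (F : Set (X → Option μ)) (hF : IsForest (Order.succ κ) F)
    (hcoh : Coherent κ F) (hmod : ClosedMod ℵ₀ F)
    (hchain : HasChain (Order.succ κ).ord F) :
    ∃ A, IsAntichainIn F A ∧ #A = Order.succ κ := by
  classical
  obtain ⟨c, hcF, hclt⟩ := hchain
  have hext : ∀ i j, i ≤ j → Ext (c j) (c i) := by
    intro i j hij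
    rcases eq_or_lt_of_le hij with rfl | h
    · intro x _; rfl
    · exact (hclt _ _ h).1
  have holim : Order.IsSuccLimit ((Order.succ κ).ord) :=
    Cardinal.isSuccLimit_ord (hκ.trans (Order.le_succ κ))
  set e := Ordinal.ToType.mk (o := (Order.succ κ).ord) with he
  let s : ((Order.succ κ).ord).ToType → ((Order.succ κ).ord).ToType :=
    fun i => e ⟨Order.succ (e.symm i).1, Set.mem_Iio.2 (holim.succ_lt (Set.mem_Iio.1 (e.symm i).2))⟩
  have hlt : ∀ i, i < s i := by
    intro i
    have : e.symm i < e.symm (s i) := by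
      simp only [s, OrderIso.symm_apply_apply]
      exact Subtype.coe_lt_coe.1 (Order.lt_succ (e.symm i).1)
    simpa using (e.symm.lt_iff_lt).1 this
  have hsle : ∀ i j, i < j → s i ≤ j := by
    intro i j hij
    have h1 : (e.symm i : Ordinal) < (e.symm j : Ordinal) := e.symm.lt_iff_lt.2 hij
    have h2 : e.symm (s i) ≤ e.symm j := by
      simp only [s, OrderIso.symm_apply_apply]
      exact Subtype.mk_le_mk.2 (Order.succ_le_of_lt h1)
    simpa using (e.symm.le_iff_le).1 h2
  have hsmono : ∀ i j, i < j → s i ≤ s j := by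
    intro i j hij
    have h1 : (e.symm i : Ordinal) < (e.symm j : Ordinal) := e.symm.lt_iff_lt.2 hij
    have h2 : e.symm (s i) ≤ e.symm (s j) := by
      simp only [s, OrderIso.symm_apply_apply]
      exact Subtype.mk_le_mk.2 (Order.succ_le_succ h1.le)
    simpa using (e.symm.le_iff_le).1 h2
  -- pick a new point for each level
  have hxex : ∀ i, ∃ x, c i x = none ∧ c (s i) x ≠ none := by
    intro i
    obtain ⟨hE, hne⟩ := hclt i (s i) (hlt i)
    by_contra hcon
    push_neg at hcon
    apply hne
    funext x
    by_cases hnx : c i x = none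
    · rw [hnx, hcon x hnx]
    · exact (hE x hnx).symm
  choose x hx1 hx2 using hxex
  have hvex : ∀ i, ∃ v, c (s i) (x i) = some v := fun i =>
    Option.ne_none_iff_exists'.1 (hx2 i)
  choose v hv using hvex
  choose y hy using fun i => exists_ne (v i)
  let f : ((Order.succ κ).ord).ToType → (X → Option μ) :=
    fun i => Function.update (c (s i)) (x i) (some (y i))
  have hfx : ∀ i, f i (x i) = some (y i) := fun i => Function.update_self _ _ _
  -- membership in F
  have hfF : ∀ i, f i ∈ F := by
    intro i
    apply hmod (c (s i)) (hcF _)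
    · ext z
      simp only [pdom, Set.mem_setOf_eq]
      by_cases hz : z = x i
      · subst hz
        simp [hfx i, hx2 i]
      · simp [f, Function.update_of_ne hz]
    · have hsub : {z | c (s i) z ≠ f i z} ⊆ {x i} := by
        intro z hz
        by_contra hzz
        exact hz (Function.update_of_ne (by simpa using hzz) _ _).symm
      calc #{z | c (s i) z ≠ f i z} ≤ #({x i} : Set X) :=
            Cardinal.mk_le_mk_of_subset hsub
        _ = 1 := Cardinal.mk_singleton _
        _ < ℵ₀ := Cardinal.one_lt_aleph0
  -- key computation : for i < j, f j (x i) = c (s i) (x i)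
  have hxne : ∀ i j, i < j → x i ≠ x j := by
    intro i j hij hxx
    have h1 : c j (x i) = c (s i) (x i) := hext (s i) j (hsle i j hij) _ (hx2 i)
    have h2 : c j (x i) = none := by rw [hxx]; exact hx1 j
    exact hx2 i (h1.symm.trans h2)
  have hfji : ∀ i j, i < j → f j (x i) = c (s i) (x i) := by
    intro i j hij
    have h1 : f j (x i) = c (s j) (x i) :=
      Function.update_of_ne (hxne i j hij) _ _
    rw [h1]
    exact hext (s i) (s j) (hsmono i j hij) _ (hx2 i)
  -- values differ at x i
  have hdiff : ∀ i j, i < j → f i (x i) ≠ f j (x i) := by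
    intro i j hij
    rw [hfx i, hfji i j hij, hv i]
    exact fun h => hy i (Option.some_injective _ h)
  -- incompatibility
  have hincomp : ∀ i j, i < j → ¬ Compat F (f i) (f j) := by
    rintro i j hij ⟨h, _, h1, h2⟩
    have e1 : h (x i) = f i (x i) := h1 _ (by rw [hfx i]; exact Option.some_ne_none _)
    have e2 : h (x i) = f j (x i) := h2 _ (by rw [hfji i j hij]; exact hx2 i)
    exact hdiff i j hij (e1.symm.trans e2)
  have hinj : Function.Injective f := by
    intro i j hij
    by_contra hne
    rcases lt_or_gt_of_ne hne with h | h
    · exact hdiff i j h (by rw [hij])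
    · exact hdiff j i h (by rw [hij])
  refine ⟨Set.range f, ⟨⟨?_, ?_⟩, ?_⟩⟩
  · rintro g ⟨i, rfl⟩; exact hfF i
  · rintro g1 ⟨i, rfl⟩ g2 ⟨j, rfl⟩ hne
    have hijne : i ≠ j := fun h => hne (by rw [h])
    rcases lt_or_gt_of_ne hijne with h | h
    · exact hincomp i j h
    · intro ⟨w, hwF, w1, w2⟩
      exact hincomp j i h ⟨w, hwF, w2, w1⟩
  · rw [Cardinal.mk_range_eq _ hinj, Cardinal.mk_toType, Cardinal.card_ord]
end ForestPaper
end

section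
/- Let κ be a regular cardinal and let F be a coherent (κ⁺, λ, κ)-forest of < κ-to-1 functions, closed under < κ modifications. Then F does not have the κ⁺-chain condition: there is an antichain in F of size κ⁺. Moreover, F is Aronszajn: F contains no ⊆-well-ordered chain of order type κ⁺. -/
open Cardinal Set
open scoped Classical

universe u v

namespace ForestPaper

variable {X : Type u} {μ : Type v}

/-- A "successor" function on `ν.ord.ToType`. -/
theorem exists_succ_fun (ν : Cardinal.{u}) (hν : ℵ₀ ≤ ν) :
    ∃ s : ν.ord.ToType → ν.ord.ToType, (∀ i, i < s i) ∧ ∀ i j, i < j → s i ≤ j := by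
  have hlim := Cardinal.isSuccLimit_ord hν
  set e := Ordinal.ToType.mk (o := ν.ord) with he
  have hm : ∀ i : ν.ord.ToType, Order.succ (e.symm i).1 < ν.ord :=
    fun i => hlim.succ_lt (e.symm i).2
  refine ⟨fun i => e ⟨Order.succ (e.symm i).1, hm i⟩, ?_, ?_⟩
  · intro i
    conv_lhs => rw [← e.apply_symm_apply i]
    rw [e.lt_iff_lt]
    exact Subtype.mk_lt_mk.mpr (Order.lt_succ _)
  · intro i j hij
    conv_rhs => rw [← e.apply_symm_apply j]
    rw [e.le_iff_le]
    refine Subtype.mk_le_mk.mpr (Order.succ_le_iff.mpr ?_)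
    exact Subtype.mk_lt_mk.mp (e.symm.lt_iff_lt.mpr hij)

/-- A coherent `(κ⁺,λ,κ)`-forest of `< κ`-to-1 functions, closed under `< κ`
modifications, has an antichain of size `κ⁺` (failure of the `κ⁺`-c.c.) and is
Aronszajn: it has no `⊆`-well-ordered chain of order type `κ⁺`. -/
theorem stmt6 {X : Type u} (κ : Cardinal.{u}) (hκ : κ.IsRegular)
    (hX : Order.succ κ ≤ #X)
    (F : Set (X → Option κ.ord.ToType)) (hF : IsForest (Order.succ κ) F)
    (hcoh : Coherent κ F) (hto1 : ∀ f ∈ F, SmallTo1 κ f)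
    (hmod : ClosedMod κ F) :
    (∃ A, IsAntichainIn F A ∧ #A = Order.succ κ) ∧
      ¬ HasChain (Order.succ κ).ord F := by
  have hℵ : ℵ₀ ≤ κ := hκ.aleph0_le
  have hι : #(Order.succ κ).ord.ToType = Order.succ κ := by
    rw [Cardinal.mk_toType, Cardinal.card_ord]
  obtain ⟨s, hs1, hs2⟩ := exists_succ_fun (Order.succ κ)
    (hℵ.trans (Order.le_succ κ))
  -- an injection from the index type into `X`
  have hxle : #(Order.succ κ).ord.ToType ≤ #X := by rw [hι]; exact hX
  obtain ⟨x⟩ := Cardinal.le_def _ _ |>.mp hxle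
  -- two distinct values
  have hμ2 : Nontrivial κ.ord.ToType := by
    rw [← Cardinal.one_lt_iff_nontrivial, Cardinal.mk_ord_toType]
    exact lt_of_lt_of_le Cardinal.one_lt_aleph0 hℵ
  obtain ⟨y0, y1, hy⟩ := exists_pair_ne κ.ord.ToType
  constructor
  · -- the antichain
    have hIic : ∀ α : (Order.succ κ).ord.ToType, #(Set.Iic α) ≤ κ := by
      intro α
      have h1 : #(Set.Iio α) ≤ κ :=
        Order.lt_succ_iff.mp (Cardinal.mk_Iio_ord_toType α)
      calc #(Set.Iic α) = #(insert α (Set.Iio α) : Set _) := by rw [Set.Iio_insert]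
        _ ≤ #(Set.Iio α) + 1 := Cardinal.mk_insert_le
        _ ≤ κ + 1 := add_le_add_left h1 1
        _ = κ := Cardinal.add_one_eq hℵ
    have hz : ∀ α : (Order.succ κ).ord.ToType,
        #(x '' Set.Iic α : Set X) < Order.succ κ := fun α =>
      Order.lt_succ_iff.mpr (le_trans Cardinal.mk_image_le (hIic α))
    have hg : ∀ α, ∃ g ∈ F, pdom g = x '' Set.Iic α := fun α =>
      hF.exists_dom _ (hz α)
    choose g hgF hgdom using hg
    set f : (Order.succ κ).ord.ToType → X → Option κ.ord.ToType := fun α t =>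
      if t = x α then some y0 else if g α t = some y0 then some y1 else g α t
      with hf
    have hdom : ∀ α, pdom (f α) = x '' Set.Iic α := by
      intro α
      ext t
      have hzt : t ∈ (x '' Set.Iic α : Set X) ↔ g α t ≠ none := by
        rw [← hgdom α]; rfl
      show f α t ≠ none ↔ _
      by_cases h1 : t = x α
      · subst h1
        rw [hf]
        simp only [if_pos rfl]
        simp only [iff_true_intro (Set.mem_image_of_mem x Set.self_mem_Iic)]
        exact iff_of_true (Option.some_ne_none _) trivial
      · rw [hf]
        simp only [if_neg h1]
        by_cases h2 : g α t = some y0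
        · rw [if_pos h2, hzt, h2]
          exact iff_of_true (Option.some_ne_none _) (Option.some_ne_none _)
        · rw [if_neg h2, hzt]
    have hfF : ∀ α, f α ∈ F := by
      intro α
      refine hmod (g α) (hgF α) (f α) ((hdom α).trans (hgdom α).symm) ?_
      have hsub : {t | g α t ≠ f α t} ⊆ insert (x α) {t | g α t = some y0} := by
        intro t ht
        by_contra hc
        simp only [Set.mem_insert_iff, Set.mem_setOf_eq, not_or] at hc
        apply ht
        show g α t = f α t
        rw [hf]
        simp only [if_neg hc.1, if_neg hc.2]
      calc #{t | g α t ≠ f α t}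
          ≤ #(insert (x α) {t | g α t = some y0} : Set X) :=
            Cardinal.mk_le_mk_of_subset hsub
        _ ≤ #{t | g α t = some y0} + 1 := Cardinal.mk_insert_le
        _ < κ := Cardinal.add_lt_of_lt hℵ (hto1 _ (hgF α) y0)
            (lt_of_lt_of_le Cardinal.one_lt_aleph0 hℵ)
    have hval : ∀ α, f α (x α) = some y0 := fun α => if_pos rfl
    have hne : ∀ α β, β ≠ α → f α (x β) ≠ some y0 := by
      intro α β hβ
      have hxx : x β ≠ x α := fun h => hβ (x.injective h)
      show (if x β = x α then some y0 else
        if g α (x β) = some y0 then some y1 else g α (x β)) ≠ some y0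
      rw [if_neg hxx]
      by_cases h2 : g α (x β) = some y0
      · rw [if_pos h2]
        intro h
        exact hy (Option.some_injective _ h).symm
      · rw [if_neg h2]; exact h2
    have hdef : ∀ α βord, βord ≤ α → f α (x βord) ≠ none := by
      intro α β hβ
      have : x β ∈ pdom (f α) := by
        rw [hdom]; exact ⟨β, hβ, rfl⟩
      exact this
    have hincomp : ∀ α β : (Order.succ κ).ord.ToType, β < α →
        ¬ Compat F (f α) (f β) := by
      rintro α β hβ ⟨h, _, h1, h2⟩
      have e1 : h (x β) = f α (x β) := h1 _ (hdef α β hβ.le)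
      have e2 : h (x β) = f β (x β) := h2 _ (hdef β β le_rfl)
      rw [hval β] at e2
      exact hne α β (ne_of_lt hβ) (e1.symm.trans e2)
    have hfinj : Function.Injective f := by
      intro α β hfe
      by_contra hne'
      rcases lt_or_gt_of_ne hne' with h | h
      · apply hne β α (ne_of_lt h)
        rw [← hfe]
        exact hval α
      · apply hne α β (ne_of_lt h)
        rw [hfe]
        exact hval β
    refine ⟨Set.range f, ⟨?_, ?_⟩, ?_⟩
    · rintro p ⟨α, rfl⟩
      exact hfF α
    · rintro p ⟨α, rfl⟩ q ⟨β, rfl⟩ hpq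
      rcases lt_trichotomy α β with h | h | h
      · rintro ⟨h', hh', e1, e2⟩
        exact hincomp β α h ⟨h', hh', e2, e1⟩
      · exact absurd (congrArg f h) hpq
      · exact hincomp α β h
    · rw [Cardinal.mk_range_eq f hfinj, hι]
  · -- no chain of order type κ⁺
    rintro ⟨c, hmem, hchain⟩
    have hExt : ∀ i j, i ≤ j → Ext (c j) (c i) := by
      intro i j hij
      rcases hij.lt_or_eq with h | h
      · exact (hchain i j h).1
      · subst h; exact fun t ht => rfl
    have hstep : ∀ i, ∃ tt, c (s i) tt ≠ none ∧ c i tt = none := by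
      intro i
      by_contra hcon
      push_neg at hcon
      apply (hchain i (s i) (hs1 i)).2
      funext tt
      by_cases h1 : c i tt = none
      · by_cases h2 : c (s i) tt = none
        · rw [h1, h2]
        · exact absurd h1 (hcon tt h2)
      · exact ((hchain i (s i) (hs1 i)).1 tt h1).symm
    choose t ht1 ht2 using hstep
    have htinj : Function.Injective t := by
      intro i i' he'
      by_contra hne'
      rcases lt_or_gt_of_ne hne' with h | h
      · have hh : c i' (t i) ≠ none := by
          rw [hExt (s i) i' (hs2 i i' h) (t i) (ht1 i)]
          exact ht1 i
        rw [he'] at hh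
        exact hh (ht2 i')
      · have hh : c i (t i') ≠ none := by
          rw [hExt (s i') i (hs2 i' i h) (t i') (ht1 i')]
          exact ht1 i'
        rw [← he'] at hh
        exact hh (ht2 i)
    have hvex : ∀ i, ∃ y, c (s i) (t i) = some y := fun i =>
      Option.ne_none_iff_exists'.mp (ht1 i)
    choose v hvv using hvex
    have hbig : ∃ y, κ < #{i | v i = y} := by
      by_contra hcon
      push_neg at hcon
      have hle : Order.succ κ ≤ κ := by
        calc Order.succ κ = #(Order.succ κ).ord.ToType := hι.symm
          _ = #(Σ y : κ.ord.ToType, {i // v i = y}) :=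
            (Cardinal.mk_congr (Equiv.sigmaFiberEquiv v)).symm
          _ = Cardinal.sum fun y => #{i // v i = y} := Cardinal.mk_sigma _
          _ ≤ Cardinal.sum fun _ : κ.ord.ToType => κ :=
            Cardinal.sum_le_sum _ _ (fun y => hcon y)
          _ = #κ.ord.ToType * κ := Cardinal.sum_const' _ _
          _ = κ * κ := by rw [Cardinal.mk_ord_toType]
          _ = κ := Cardinal.mul_eq_self hℵ
      exact absurd hle (not_le.mpr (Order.lt_succ κ))
    obtain ⟨y, hyb⟩ := hbig
    obtain ⟨T, hTsub, hTcard⟩ := Cardinal.le_mk_iff_exists_subset.mp hyb.le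
    have hreg : (Order.succ κ).IsRegular := Cardinal.isRegular_succ hℵ
    set e := Ordinal.ToType.mk (o := (Order.succ κ).ord) with he
    have hTsm : #↑T < ((Order.succ κ).ord).cof := by
      rw [hreg.cof_eq, hTcard]
      exact Order.lt_succ κ
    have hsup : (⨆ i : ↑T, (e.symm (s i.1)).1) < (Order.succ κ).ord :=
      Ordinal.iSup_lt_ord hTsm (fun i => (e.symm (s i.1)).2)
    have hjb : ∀ i (hi : i ∈ T), s i ≤ e ⟨_, hsup⟩ := by
      intro i hi
      have h1 : (e.symm (s i)).1 ≤ ⨆ i : ↑T, (e.symm (s i.1)).1 :=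
        Ordinal.le_iSup (fun i : ↑T => (e.symm (s i.1)).1) (⟨i, hi⟩ : ↑T)
      calc s i = e (e.symm (s i)) := (e.apply_symm_apply _).symm
        _ ≤ e ⟨_, hsup⟩ := e.le_iff_le.mpr (Subtype.coe_le_coe.mp h1)
    have hfib : ∀ i : ↑T, c (e ⟨_, hsup⟩) (t i.1) = some y := by
      rintro ⟨i, hi⟩
      have hh := hExt (s i) _ (hjb i hi) (t i) (ht1 i)
      rw [hh, hvv i]
      exact congrArg some (hTsub hi)
    have hlast : κ ≤ #{u | c (e ⟨_, hsup⟩) u = some y} := by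
      refine le_trans (le_of_eq hTcard.symm) ?_
      exact Cardinal.mk_le_of_injective
        (f := fun i : ↑T => (⟨t i.1, hfib i⟩ : {u | c (e ⟨_, hsup⟩) u = some y}))
        (fun a b hab => Subtype.ext (htinj (congrArg Subtype.val hab)))
    exact absurd hlast (not_le.mpr (hto1 _ (hmem _) y))


end ForestPaper
end

section
/- Let κ be a regular cardinal and F a coherent (κ⁺, λ, κ)-forest closed under < κ modifications. Then F, ordered by reverse extension, is (2^κ)⁺-Knaster: every subset of F of size (2^κ)⁺ contains a subset of size (2^κ)⁺ of pairwise compatible elements. -/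
open Cardinal Set
open scoped Classical

universe u v

namespace ForestPaper

variable {X : Type u} {μ : Type v}

lemma mk_Iic_le {ι : Type u} [LinearOrder ι] {c : Cardinal.{u}} (hc : ℵ₀ ≤ c)
    {a : ι} (h : #(Iio a) ≤ c) : #(Iic a) ≤ c := by
  have : (Iic a : Set ι) = insert a (Iio a) := by
    ext x; simp [le_iff_lt_or_eq, or_comm]
  rw [this]
  calc #(insert a (Iio a) : Set ι) ≤ #(Iio a) + 1 := mk_insert_le
    _ ≤ c + c := add_le_add h (le_trans (le_of_lt one_lt_aleph0) hc)
    _ = c := add_eq_self hc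

lemma mul_le_of_le' {a b c : Cardinal.{u}} (hc : ℵ₀ ≤ c) (ha : a ≤ c) (hb : b ≤ c) :
    a * b ≤ c := (mul_le_mul' ha hb).trans (mul_eq_self hc).le

lemma add_le_of_le' {a b c : Cardinal.{u}} (hc : ℵ₀ ≤ c) (ha : a ≤ c) (hb : b ≤ c) :
    a + b ≤ c := (add_le_add ha hb).trans (add_eq_self hc).le

lemma exists_ub {ι : Type u} [LinearOrder ι] {ν : Cardinal.{u}} (hν0 : ℵ₀ ≤ ν)
    (hι : #ι = Order.succ ν) (hsmall : ∀ a : ι, #(Iic a) ≤ ν)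
    {s : Set ι} (hs : #s ≤ ν) : ∃ x : ι, ∀ y ∈ s, y < x := by
  have hcov : #(⋃ y ∈ s, Iic y) ≤ ν := by
    refine le_trans (mk_biUnion_le _ _) (mul_le_of_le' hν0 hs (ciSup_le' ?_))
    exact fun y => hsmall y.1
  have : ¬ (univ : Set ι) ⊆ ⋃ y ∈ s, Iic y := by
    intro hsub
    have := (mk_le_mk_of_subset hsub).trans hcov
    rw [mk_univ, hι] at this
    exact absurd this (not_le.2 (Order.lt_succ ν))
  obtain ⟨x, -, hx⟩ := not_subset.1 this
  refine ⟨x, fun y hy => ?_⟩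
  by_contra hxy
  exact hx (mem_biUnion hy (not_lt.1 hxy))

lemma exists_chain {ι : Type u} {τ : Type v} [Nonempty ι] [Preorder τ] [WellFoundedLT τ]
    (R : ι → ι → Prop) (P : Set ι)
    (h : ∀ f : τ → ι, ∀ i : τ, ∃ x, x ∈ P ∧ ∀ j < i, R (f j) x) :
    ∃ c : τ → ι, ∀ i, c i ∈ P ∧ ∀ j < i, R (c j) (c i) := by
  classical
  let c : τ → ι := (wellFounded_lt).fix (C := fun _ => ι)
    (fun i rec => (h (fun j => if hj : j < i then rec j hj else Classical.arbitrary ι) i).choose)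
  have hc : ∀ i, c i =
      (h (fun j => if hj : j < i then c j else Classical.arbitrary ι) i).choose := by
    intro i
    show WellFounded.fix _ _ i = _
    rw [WellFounded.fix_eq]
  refine ⟨c, fun i => ?_⟩
  obtain ⟨hP, hR⟩ := (h (fun j => if hj : j < i then c j else Classical.arbitrary ι) i).choose_spec
  rw [hc i]
  exact ⟨hP, fun j hj => by have := hR j hj; rwa [dif_pos hj] at this⟩

instance : WellFoundedLT (ULift.{u} ℕ) :=
  ⟨InvImage.wf (fun x : ULift.{u} ℕ => x.down)
    (wellFounded_lt : WellFounded ((· < ·) : ℕ → ℕ → Prop))⟩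

lemma exists_deltaSystem {ι : Type u} [LinearOrder ι] [WellFoundedLT ι] {κ ν : Cardinal.{u}}
    (hκ0 : ℵ₀ ≤ κ) (hκν : κ < ν) (hν0 : ℵ₀ ≤ ν) (hpow : ν ^ κ = ν)
    (hι : #ι = Order.succ ν) (hsmall : ∀ a : ι, #(Iic a) ≤ ν)
    (S : ι → Set ι) (hS : ∀ i, #(S i) ≤ κ) :
    ∃ (T : Set ι) (r : Set ι), #T = Order.succ ν ∧ #r ≤ κ ∧ (∀ δ ∈ T, r ⊆ S δ) ∧
      (∀ δ ∈ T, ∀ δ' ∈ T, δ < δ' → S δ ∩ S δ' = r) := by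
  classical
  have hνκ : κ ≤ ν := hκν.le
  have hιne : Nonempty ι := by
    rw [← mk_ne_zero_iff, hι]
    exact ((Cardinal.zero_le ν).trans_lt (Order.lt_succ ν)).ne'
  have hub : ∀ {s : Set ι}, #s ≤ ν → ∃ x : ι, ∀ y ∈ s, y < x :=
    fun hs => exists_ub hν0 hι hsmall hs
  set C : Set ι := {δ : ι | ∀ α, α < δ → S α ⊆ Iio δ} with hCdef
  -- C is unbounded
  have hC : ∀ a : ι, ∃ b ∈ C, a < b := by
    intro a
    have h : ∀ f : ULift.{u} ℕ → ι, ∀ i : ULift.{u} ℕ, ∃ x, x ∈ (univ : Set ι) ∧ ∀ j < i,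
        (f j < x ∧ a < x ∧ ∀ α ≤ f j, S α ⊆ Iio x) := by
      intro f i
      have e2 : ∀ j : ULift.{u} ℕ, #(⋃ α ∈ Iic (f j), S α) ≤ ν := by
        intro j
        refine le_trans (mk_biUnion_le S (Iic (f j)))
          (mul_le_of_le' hν0 (hsmall _) (ciSup_le' ?_))
        exact fun α => (hS _).trans hνκ
      have e3 : #(⋃ j ∈ (Iio i : Set (ULift.{u} ℕ)), ⋃ α ∈ Iic (f j), S α) ≤ ν := by
        refine le_trans (mk_biUnion_le (fun j => ⋃ α ∈ Iic (f j), S α) (Iio i))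
          (mul_le_of_le' hν0 ?_ (ciSup_le' fun j => e2 j.1))
        exact le_trans (mk_le_aleph0 (α := ↥(Iio i : Set (ULift.{u} ℕ)))) hν0
      have hbig : #(insert a ((f '' Iio i) ∪ ⋃ j ∈ (Iio i : Set (ULift.{u} ℕ)), ⋃ α ∈ Iic (f j), S α) : Set ι)
          ≤ ν := by
        refine le_trans mk_insert_le (add_le_of_le' hν0 ?_ (le_trans (le_of_lt one_lt_aleph0) hν0))
        refine le_trans (mk_union_le _ _) (add_le_of_le' hν0 ?_ e3)
        exact le_trans mk_image_le (le_trans (mk_le_aleph0 (α := ↥(Iio i : Set (ULift.{u} ℕ)))) hν0)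
      obtain ⟨x, hx⟩ := hub hbig
      refine ⟨x, trivial, fun j hj => ⟨?_, ?_, ?_⟩⟩
      · exact hx _ (mem_insert_of_mem _ (Or.inl ⟨j, hj, rfl⟩))
      · exact hx _ (mem_insert _ _)
      · intro α hα y hy
        exact hx _ (mem_insert_of_mem _ (Or.inr (mem_biUnion hj (mem_biUnion hα hy))))
    obtain ⟨c, hc⟩ := exists_chain (fun x y => x < y ∧ a < y ∧ ∀ α ≤ x, S α ⊆ Iio y) univ h
    obtain ⟨u, hu⟩ := hub (s := range c)
      (le_trans mk_range_le (le_trans (mk_le_aleph0 (α := ULift.{u} ℕ)) hν0))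
    set U : Set ι := {x : ι | ∀ n, c n < x} with hUdef
    have hUne : U.Nonempty := ⟨u, fun n => hu _ (mem_range_self n)⟩
    set b := (wellFounded_lt (α := ι)).min U hUne with hbdef
    have hbU : ∀ n, c n < b := WellFounded.min_mem _ U hUne
    have hbC : b ∈ C := by
      intro α hα y hy
      have hαU : α ∉ U := fun hmem => (WellFounded.not_lt_min _ U hmem) hα
      obtain ⟨n, hn⟩ := not_forall.1 hαU
      have hR := (hc (ULift.up (n.down + 1))).2 n (Nat.lt_succ_self n.down)
      exact lt_trans (hR.2.2 α (not_lt.1 hn) hy) (hbU (ULift.up (n.down + 1)))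
    have hab : a < b :=
      lt_trans ((hc (ULift.up 1)).2 (ULift.up 0) Nat.zero_lt_one).2.1 (hbU (ULift.up 1))
    exact ⟨b, hbC, hab⟩
  -- the weak Fodor step
  have key : ∃ β : ι, #{δ : ι | δ ∈ C ∧ β < δ ∧ (S δ ∩ Iio δ) ⊆ Iio β} = Order.succ ν := by
    by_contra hcon
    push_neg at hcon
    have H : ∀ β : ι, #{δ : ι | δ ∈ C ∧ β < δ ∧ (S δ ∩ Iio δ) ⊆ Iio β} ≤ ν := by
      intro β
      have h1 : #{δ : ι | δ ∈ C ∧ β < δ ∧ (S δ ∩ Iio δ) ⊆ Iio β} ≤ Order.succ ν := by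
        rw [← hι]; exact mk_set_le _
      exact Order.lt_succ_iff.1 (lt_of_le_of_ne h1 (hcon β))
    have hg : ∀ β : ι, ∃ γ : ι, β < γ ∧
        ∀ δ, (δ ∈ C ∧ β < δ ∧ (S δ ∩ Iio δ) ⊆ Iio β) → δ < γ := by
      intro β
      obtain ⟨γ, hγ⟩ := hub (s := insert β {δ : ι | δ ∈ C ∧ β < δ ∧ (S δ ∩ Iio δ) ⊆ Iio β})
        (le_trans mk_insert_le (add_le_of_le' hν0 (H β) (le_trans (le_of_lt one_lt_aleph0) hν0)))
      exact ⟨γ, hγ β (mem_insert _ _), fun δ hδ => hγ δ (mem_insert_of_mem _ hδ)⟩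
    choose g hg1 hg2 using hg
    have hσ : #(Order.succ κ).ord.ToType = Order.succ κ := mk_ord_toType _
    have hσsmall : ∀ a : (Order.succ κ).ord.ToType, #(Iic a) ≤ κ :=
      fun a => mk_Iic_le hκ0 (Order.lt_succ_iff.1 (mk_Iio_ord_toType a))
    have hσne : Nonempty (Order.succ κ).ord.ToType := by
      rw [← mk_ne_zero_iff, hσ]
      exact ((Cardinal.zero_le κ).trans_lt (Order.lt_succ κ)).ne'
    have hσub : ∀ {s : Set (Order.succ κ).ord.ToType}, #s ≤ κ → ∃ x, ∀ y ∈ s, y < x :=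
      fun hs => exists_ub hκ0 hσ hσsmall hs
    have hσnomax : ∀ i : (Order.succ κ).ord.ToType, ∃ i', i < i' := by
      intro i
      obtain ⟨x, hx⟩ := hσub (s := {i}) (by simpa using one_le_aleph0.trans hκ0)
      exact ⟨x, hx i rfl⟩
    have h : ∀ f : (Order.succ κ).ord.ToType → ι, ∀ i, ∃ x, x ∈ C ∧
        ∀ j < i, (f j < x ∧ g (f j) < x) := by
      intro f i
      have him : #(f '' Iio i ∪ g '' (f '' Iio i) : Set ι) ≤ ν := by
        have h1 : #(f '' Iio i : Set ι) ≤ ν :=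
          le_trans mk_image_le ((Order.lt_succ_iff.1 (mk_Iio_ord_toType i)).trans hνκ)
        exact le_trans (mk_union_le _ _) (add_le_of_le' hν0 h1 (le_trans mk_image_le h1))
      obtain ⟨u, hu⟩ := hub him
      obtain ⟨x, hxC, hux⟩ := hC u
      refine ⟨x, hxC, fun j hj => ⟨?_, ?_⟩⟩
      · exact lt_trans (hu _ (Or.inl ⟨j, hj, rfl⟩)) hux
      · exact lt_trans (hu _ (Or.inr (mem_image_of_mem g ⟨j, hj, rfl⟩))) hux
    obtain ⟨c, hc⟩ := exists_chain (fun x y => x < y ∧ g x < y) C h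
    have hmono : ∀ {j i}, j < i → c j < c i := fun {j i} hj => ((hc i).2 j hj).1
    obtain ⟨u, hu⟩ := hub (s := range c)
      (le_trans mk_range_le (hσ.le.trans (Order.succ_le_of_lt hκν)))
    set U : Set ι := {x : ι | ∀ i, c i < x} with hUdef
    have hUne : U.Nonempty := ⟨u, fun i => hu _ (mem_range_self i)⟩
    set b := (wellFounded_lt (α := ι)).min U hUne with hbdef
    have hbU : ∀ i, c i < b := WellFounded.min_mem _ U hUne
    have hbC : b ∈ C := by
      intro α hα y hy
      have hαU : α ∉ U := fun hmem => (WellFounded.not_lt_min _ U hmem) hα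
      obtain ⟨i, hi⟩ := not_forall.1 hαU
      obtain ⟨i', hii'⟩ := hσnomax i
      exact lt_trans ((hc i').1 α (lt_of_le_of_lt (not_lt.1 hi) (hmono hii')) hy) (hbU i')
    have hyc : ∀ y : ↥(S b ∩ Iio b), ∃ i, y.1 ≤ c i := by
      intro y
      have hyU : y.1 ∉ U := fun hmem => (WellFounded.not_lt_min _ U hmem) y.2.2
      obtain ⟨i, hi⟩ := not_forall.1 hyU
      exact ⟨i, not_lt.1 hi⟩
    choose iy hiy using hyc
    obtain ⟨jstar, hjstar⟩ := hσub (s := range iy)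
      (le_trans mk_range_le ((mk_le_mk_of_subset inter_subset_left).trans (hS b)))
    have hbd : (S b ∩ Iio b) ⊆ Iio (c jstar) := by
      intro y hy
      exact lt_of_le_of_lt (hiy ⟨y, hy⟩) (hmono (hjstar _ (mem_range_self _)))
    have h1 : b < g (c jstar) := hg2 (c jstar) b ⟨hbC, hbU jstar, hbd⟩
    obtain ⟨i', hi'⟩ := hσnomax jstar
    have h2 : g (c jstar) < c i' := ((hc i').2 jstar hi').2
    exact absurd (lt_trans h1 (lt_trans h2 (hbU i'))) (lt_irrefl b)
  obtain ⟨βb, hT⟩ := key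
  set T : Set ι := {δ : ι | δ ∈ C ∧ βb < δ ∧ (S δ ∩ Iio δ) ⊆ Iio βb} with hTdef
  -- coding
  have hcode : ∀ δ : ↥T, ∃ cd : κ.ord.ToType → Option ↥(Iic βb), ∀ y : ↥(Iic βb),
      (∃ m, cd m = some y) ↔ (y.1 ∈ S δ.1 ∧ y.1 < δ.1) := by
    intro δ
    have hsle : #{y : ↥(Iic βb) | y.1 ∈ S δ.1 ∧ y.1 < δ.1} ≤ #(κ.ord.ToType) := by
      rw [mk_ord_toType]
      refine le_trans (mk_le_of_injective (f := fun y : {y : ↥(Iic βb) | y.1 ∈ S δ.1 ∧ y.1 < δ.1}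
        => (⟨y.1.1, y.2.1⟩ : ↥(S δ.1))) ?_) (hS δ.1)
      intro y z hyz
      ext
      simpa using hyz
    obtain ⟨emb⟩ := (le_def _ _).1 hsle
    refine ⟨fun m => if h : ∃ z, emb z = m then some (h.choose).1 else none, ?_⟩
    intro y
    constructor
    · rintro ⟨m, hm⟩
      dsimp only at hm
      by_cases h : ∃ z, emb z = m
      · rw [dif_pos h] at hm
        have hmem := (h.choose).2
        rwa [Option.some_inj.1 hm] at hmem
      · rw [dif_neg h] at hm
        exact absurd hm (by simp)
    · intro hy
      have h : ∃ z, emb z = emb ⟨y, hy⟩ := ⟨⟨y, hy⟩, rfl⟩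
      refine ⟨emb ⟨y, hy⟩, ?_⟩
      dsimp only
      rw [dif_pos h, emb.injective h.choose_spec]
  choose code hcodespec using hcode
  have hYle : #↥(Iic βb) ≤ ν := hsmall βb
  have hcd : #(κ.ord.ToType → Option ↥(Iic βb)) ≤ ν := by
    calc #(κ.ord.ToType → Option ↥(Iic βb)) = (#(Option ↥(Iic βb))) ^ κ := by
          rw [← power_def, mk_ord_toType]
      _ = (#↥(Iic βb) + 1) ^ κ := by rw [mk_option]
      _ ≤ ν ^ κ := power_le_power_right
          (add_le_of_le' hν0 hYle (le_trans (le_of_lt one_lt_aleph0) hν0))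
      _ = ν := hpow
  have hTal : ℵ₀ ≤ #↥T := by rw [hT]; exact hν0.trans (Order.lt_succ ν).le
  have hcof : #(κ.ord.ToType → Option ↥(Iic βb)) < (#↥T).ord.cof := by
    rw [hT, (isRegular_succ hν0).cof_eq]
    exact lt_of_le_of_lt hcd (Order.lt_succ ν)
  obtain ⟨cd0, hcd0⟩ := Cardinal.infinite_pigeonhole code hTal hcof
  have hne : (code ⁻¹' {cd0}).Nonempty := by
    rw [← nonempty_coe_sort, ← mk_ne_zero_iff, hcd0, hT]
    exact ((Cardinal.zero_le ν).trans_lt (Order.lt_succ ν)).ne'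
  obtain ⟨δ0, hδ0⟩ := hne
  have hroot : ∀ δ : ↥T, code δ = cd0 → S δ.1 ∩ Iio δ.1 = S δ0.1 ∩ Iio δ0.1 := by
    have hgen : ∀ δ δ' : ↥T, code δ = code δ' →
        S δ.1 ∩ Iio δ.1 ⊆ S δ'.1 ∩ Iio δ'.1 := by
      intro δ δ' hcc y hy
      have hyY : y ∈ Iic βb := le_of_lt (δ.2.2.2 hy)
      have h1 := (hcodespec δ ⟨y, hyY⟩).2 ⟨hy.1, hy.2⟩
      rw [hcc] at h1
      exact (hcodespec δ' ⟨y, hyY⟩).1 h1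
    intro δ hδ
    have hδ0' : code δ0 = cd0 := hδ0
    exact subset_antisymm (hgen δ δ0 (by rw [hδ, hδ0'])) (hgen δ0 δ (by rw [hδ, hδ0']))
  refine ⟨Subtype.val '' (code ⁻¹' {cd0}), S δ0.1 ∩ Iio δ0.1, ?_, ?_, ?_, ?_⟩
  · rw [mk_image_eq Subtype.val_injective, hcd0, hT]
  · exact (mk_le_mk_of_subset inter_subset_left).trans (hS δ0.1)
  · rintro δ ⟨δ', hδ', rfl⟩
    rw [← hroot δ' hδ']
    exact inter_subset_left
  · rintro δ ⟨δ1, hδ1, rfl⟩ δ' ⟨δ2, hδ2, rfl⟩ hlt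
    apply subset_antisymm
    · intro y hy
      rw [← hroot δ2 hδ2]
      exact ⟨hy.2, δ2.2.1 δ1.1 hlt hy.1⟩
    · intro y hy
      have e1 := hroot δ1 hδ1
      have e2 := hroot δ2 hδ2
      rw [← e1] at hy
      refine ⟨hy.1, ?_⟩
      rw [e1, ← e2] at hy
      exact hy.1

lemma agree_compat {X : Type u} {μ : Type v} {κ : Cardinal.{u}} {F : Set (X → Option μ)}
    (hκ : ℵ₀ ≤ κ) (hF : IsForest (Order.succ κ) F) (hcoh : Coherent κ F) (hmod : ClosedMod κ F)
    {f g : X → Option μ} (hf : f ∈ F) (hg : g ∈ F) (hagree : Agree f g) : Compat F f g := by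
  classical
  have h1 : #(pdom f) ≤ κ := Order.lt_succ_iff.1 (hF.dom_small f hf)
  have h2 : #(pdom g) ≤ κ := Order.lt_succ_iff.1 (hF.dom_small g hg)
  have hz : #(pdom f ∪ pdom g : Set X) < Order.succ κ := by
    refine lt_of_le_of_lt (mk_union_le _ _) ?_
    exact lt_of_le_of_lt (add_le_of_le' hκ h1 h2) (Order.lt_succ κ)
  obtain ⟨h, hh, hdh, hext⟩ := hF.extend_mem f hf _ hz subset_union_left
  set h' : X → Option μ := fun x => if x ∈ pdom g then g x else h x with hh'def
  have hdom : pdom h' = pdom h := by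
    ext x
    by_cases hx : x ∈ pdom g
    · have hxh : x ∈ pdom h := by rw [hdh]; exact mem_union_right _ hx
      have he : h' x = g x := if_pos hx
      constructor
      · intro _; exact hxh
      · intro _; show h' x ≠ none; rw [he]; exact hx
    · have he : h' x = h x := if_neg hx
      constructor
      · intro hm; have hm' : h' x ≠ none := hm; rw [he] at hm'; exact hm'
      · intro hm; show h' x ≠ none; rw [he]; exact hm
  have hsmalldiff : #{x | h x ≠ h' x} < κ := by
    refine lt_of_le_of_lt (mk_le_mk_of_subset ?_) (hcoh h hh g hg)
    intro x hx
    simp only [mem_setOf_eq] at hx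
    by_cases hxg : x ∈ pdom g
    · have he : h' x = g x := if_pos hxg
      rw [he] at hx
      have hxh : x ∈ pdom h := by rw [hdh]; exact mem_union_right _ hxg
      exact ⟨hxh, hxg, hx⟩
    · have he : h' x = h x := if_neg hxg
      rw [he] at hx
      exact absurd rfl hx
  have hh' : h' ∈ F := hmod h hh h' hdom hsmalldiff
  refine ⟨h', hh', ?_, ?_⟩
  · intro x hx
    by_cases hxg : x ∈ pdom g
    · have he : h' x = g x := if_pos hxg
      rw [he]
      exact (hagree x hx hxg).symm
    · have he : h' x = h x := if_neg hxg
      rw [he]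
      exact hext x hx
  · intro x hx
    exact if_pos hx


/-- A coherent `(κ⁺,λ,κ)`-forest closed under `< κ` modifications is
`(2^κ)⁺`-Knaster: any subset of size `(2^κ)⁺` has a pairwise compatible subset
of size `(2^κ)⁺`. -/
theorem stmt7 {X : Type u} (κ : Cardinal.{u}) (hκ : κ.IsRegular)
    (F : Set (X → Option κ.ord.ToType)) (hF : IsForest (Order.succ κ) F)
    (hcoh : Coherent κ F) (hmod : ClosedMod κ F)
    (A : Set (X → Option κ.ord.ToType)) (hA : A ⊆ F)
    (hcard : #A = Order.succ (2 ^ κ)) :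
    ∃ B ⊆ A, #B = Order.succ (2 ^ κ) ∧
      ∀ f ∈ B, ∀ g ∈ B, Compat F f g := by
  classical
  set ν : Cardinal.{u} := 2 ^ κ with hνdef
  have hκ0 : ℵ₀ ≤ κ := hκ.aleph0_le
  have hκν : κ < ν := cantor κ
  have hν0 : ℵ₀ ≤ ν := hκ0.trans hκν.le
  have hpow : ν ^ κ = ν := by
    rw [hνdef, ← power_mul, mul_eq_self hκ0]
  have hXne : Nonempty X := by
    by_contra hX
    rw [not_nonempty_iff] at hX
    have hsub : Subsingleton (X → Option κ.ord.ToType) :=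
      ⟨fun a b => funext fun x => (hX.false x).elim⟩
    have hA1 : #↥A ≤ 1 := le_trans (mk_set_le A) (le_one_iff_subsingleton.2 hsub)
    rw [hcard] at hA1
    exact absurd (lt_of_le_of_lt (le_trans (le_of_lt one_lt_aleph0) hν0) (Order.lt_succ ν))
      (not_lt.2 hA1)
  have hι : #(Order.succ ν).ord.ToType = Order.succ ν := mk_ord_toType _
  have hsmallι : ∀ a : (Order.succ ν).ord.ToType, #(Iic a) ≤ ν :=
    fun a => mk_Iic_le hν0 (Order.lt_succ_iff.1 (mk_Iio_ord_toType a))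
  obtain ⟨ee⟩ : Nonempty ((Order.succ ν).ord.ToType ≃ ↥A) :=
    Cardinal.eq.1 (by rw [hι, hcard])
  set fam : (Order.succ ν).ord.ToType → (X → Option κ.ord.ToType) :=
    fun i => (ee i : X → Option κ.ord.ToType) with hfamdef
  have hfamA : ∀ i, fam i ∈ A := fun i => (ee i).2
  have hfamF : ∀ i, fam i ∈ F := fun i => hA (hfamA i)
  have hfaminj : Function.Injective fam := fun i j hij => ee.injective (Subtype.ext hij)
  have hdomκ : ∀ i, #(pdom (fam i)) ≤ κ :=
    fun i => Order.lt_succ_iff.1 (hF.dom_small _ (hfamF i))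
  set W := ⋃ i, pdom (fam i) with hWdef
  have hWcard : #↥W ≤ #(Order.succ ν).ord.ToType := by
    rw [hι]
    refine le_trans (mk_iUnion_le _) ?_
    refine le_trans (mul_le_mul' hι.le (ciSup_le' hdomκ)) ?_
    exact mul_le_of_le' (hν0.trans (Order.lt_succ ν).le) le_rfl
      ((hκν.le.trans (Order.lt_succ ν).le))
  obtain ⟨e⟩ := (le_def ↥W (Order.succ ν).ord.ToType).1 hWcard
  set S : (Order.succ ν).ord.ToType → Set (Order.succ ν).ord.ToType :=
    fun i => e '' {x : ↥W | x.1 ∈ pdom (fam i)} with hSdef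
  have hScard : ∀ i, #(S i) ≤ κ := by
    intro i
    refine le_trans mk_image_le (le_trans ?_ (hdomκ i))
    exact mk_le_of_injective
      (f := fun x : {x : ↥W | x.1 ∈ pdom (fam i)} => (⟨x.1.1, x.2⟩ : ↥(pdom (fam i))))
      (fun x y hxy => by ext; simpa using hxy)
  obtain ⟨T, r, hTcard, hrκ, hrsub, hTdelta⟩ :=
    exists_deltaSystem hκ0 hκν hν0 hpow hι hsmallι S hScard
  set q : (Order.succ ν).ord.ToType → X :=
    fun y => if h : ∃ x : ↥W, e x = y then h.choose.1 else Classical.arbitrary X with hqdef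
  have hq : ∀ x : ↥W, q (e x) = x.1 := by
    intro x
    have h : ∃ x' : ↥W, e x' = e x := ⟨x, rfl⟩
    simp only [hqdef]
    rw [dif_pos h]
    exact congrArg Subtype.val (e.injective h.choose_spec)
  set vals : ↥T → (↥r → Option κ.ord.ToType) := fun δ y => fam δ.1 (q y.1) with hvalsdef
  have hvcard : #(↥r → Option κ.ord.ToType) ≤ ν := by
    calc #(↥r → Option κ.ord.ToType) = (#(Option κ.ord.ToType)) ^ #↥r := by rw [← power_def]
      _ = (κ + 1) ^ #↥r := by rw [mk_option, mk_ord_toType]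
      _ = κ ^ #↥r := by rw [add_one_eq hκ0]
      _ ≤ κ ^ κ := power_le_power_left (aleph0_pos.trans_le hκ0).ne' hrκ
      _ = 2 ^ κ := power_self_eq hκ0
  have hTal : ℵ₀ ≤ #↥T := by rw [hTcard]; exact hν0.trans (Order.lt_succ ν).le
  have hcof : #(↥r → Option κ.ord.ToType) < (#↥T).ord.cof := by
    rw [hTcard, (isRegular_succ hν0).cof_eq]
    exact lt_of_le_of_lt hvcard (Order.lt_succ ν)
  obtain ⟨v0, hv0⟩ := Cardinal.infinite_pigeonhole vals hTal hcof
  have hagree : ∀ δ δ' : ↥T, δ.1 < δ'.1 → vals δ = vals δ' →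
      Agree (fam δ.1) (fam δ'.1) := by
    intro δ δ' hlt hvv x hx hx'
    have hxW : x ∈ W := mem_iUnion.2 ⟨δ.1, hx⟩
    have hy1 : e ⟨x, hxW⟩ ∈ S δ.1 := ⟨⟨x, hxW⟩, hx, rfl⟩
    have hy2 : e ⟨x, hxW⟩ ∈ S δ'.1 := ⟨⟨x, hxW⟩, hx', rfl⟩
    have hyr : e ⟨x, hxW⟩ ∈ r := by
      rw [← hTdelta δ.1 δ.2 δ'.1 δ'.2 hlt]
      exact ⟨hy1, hy2⟩
    have hcf := congrFun hvv (⟨e ⟨x, hxW⟩, hyr⟩ : ↥r)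
    simp only [hvalsdef] at hcf
    rwa [hq ⟨x, hxW⟩] at hcf
  refine ⟨(fun δ : ↥T => fam δ.1) '' (vals ⁻¹' {v0}), ?_, ?_, ?_⟩
  · rintro f ⟨δ, -, rfl⟩
    exact hfamA δ.1
  · rw [mk_image_eq (fun a b hab => Subtype.ext (hfaminj hab)), hv0, hTcard]
  · rintro f ⟨δ1, hδ1, rfl⟩ f' ⟨δ2, hδ2, rfl⟩
    rcases eq_or_ne δ1 δ2 with rfl | hne
    · exact ⟨fam δ1.1, hfamF _, fun x _ => rfl, fun x _ => rfl⟩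
    have hvv : vals δ1 = vals δ2 := by
      have e1 : vals δ1 = v0 := hδ1
      have e2 : vals δ2 = v0 := hδ2
      rw [e1, e2]
    have hne' : δ1.1 ≠ δ2.1 := fun h => hne (Subtype.ext h)
    rcases hne'.lt_or_gt with hlt | hlt
    · exact agree_compat hκ0 hF hcoh hmod (hfamF _) (hfamF _) (hagree δ1 δ2 hlt hvv)
    · have hsym := hagree δ2 δ1 hlt hvv.symm
      exact agree_compat hκ0 hF hcoh hmod (hfamF _) (hfamF _)
        (fun x hx1 hx2 => (hsym x hx2 hx1).symm)
end ForestPaper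
end

section
/- If there exists a coherent (κ⁺, λ, κ)-forest consisting of injective functions, then there exists a family of λ many subsets of κ, each of cardinality κ, that are pairwise almost disjoint (any two have intersection of size < κ). -/
open Cardinal Set
open scoped Classical

universe u v

namespace ForestPaper

variable {X : Type u} {μ : Type v}

lemma mk_pran_of_pinj {X μ : Type u} {f : X → Option μ} (hf : PInj f) :
    #(pran f) = #(pdom f) := by
  refine Cardinal.mk_congr (Equiv.symm (Equiv.ofBijective
    (fun x : pdom f => (⟨(f x.1).get (Option.ne_none_iff_isSome.mp x.2),
      x.1, (Option.some_get _).symm⟩ : pran f)) ⟨?_, ?_⟩))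
  · rintro ⟨a, ha⟩ ⟨b, hb⟩ h
    have h' : f a = f b := by
      rw [← Option.some_get (Option.ne_none_iff_isSome.mp ha),
        ← Option.some_get (Option.ne_none_iff_isSome.mp hb)]
      exact congrArg some (congrArg Subtype.val h)
    exact Subtype.ext (hf a b ha h')
  · rintro ⟨y, a, ha⟩
    refine ⟨⟨a, by simp [pdom, ha]⟩, ?_⟩
    apply Subtype.ext
    simp [ha]

/-- If there is a coherent `(κ⁺,λ,κ)`-forest of injective functions, then there
are `λ` many subsets of `κ`, each of size `κ`, pairwise almost disjoint. -/
theorem stmt8 {X : Type u} (κ : Cardinal.{u}) (hκ : ℵ₀ ≤ κ)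
    (hX : Order.succ κ ≤ #X)
    (F : Set (X → Option κ.ord.ToType)) (hF : IsForest (Order.succ κ) F)
    (hcoh : Coherent κ F) (hinj : ∀ f ∈ F, PInj f) :
    ∃ A : X → Set κ.ord.ToType,
      (∀ i, #(A i) = κ) ∧ ∀ i j, i ≠ j → #(A i ∩ A j : Set _) < κ := by
  have hκX : κ ≤ #X := (Order.lt_succ κ).le.trans hX
  have hmkT : #(κ.ord.ToType) = κ := Cardinal.mk_ord_toType κ
  have hcard : #(X × κ.ord.ToType) = #X := by
    rw [Cardinal.mk_prod, Cardinal.lift_id, Cardinal.lift_id, hmkT]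
    exact Cardinal.mul_eq_left (hκ.trans hκX) hκX
      ((Cardinal.aleph0_pos.trans_le hκ).ne')
  obtain ⟨e⟩ := Cardinal.eq.mp hcard
  set z : X → Set X := fun i => Set.range (fun t : κ.ord.ToType => e (i, t)) with hz
  have hzinj : ∀ i, Function.Injective (fun t : κ.ord.ToType => e (i, t)) := by
    intro i a b h
    simpa using congrArg Prod.snd (e.injective h)
  have hzcard : ∀ i, #(z i) = κ := by
    intro i
    rw [hz]
    rw [Cardinal.mk_range_eq _ (hzinj i), hmkT]
  have hzdisj : ∀ i j, i ≠ j → ∀ x, x ∈ z i → x ∈ z j → False := by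
    rintro i j hij x ⟨a, rfl⟩ ⟨b, hb⟩
    exact hij (congrArg Prod.fst (e.injective hb)).symm
  have hzlt : ∀ i, #(z i) < Order.succ κ := fun i => by
    rw [hzcard i]; exact Order.lt_succ κ
  have hexf : ∀ i : X, ∃ f ∈ F, pdom f = z i := fun i => hF.exists_dom (z i) (hzlt i)
  choose f hfF hfdom using hexf
  refine ⟨fun i => pran (f i), ?_, ?_⟩
  · intro i
    rw [mk_pran_of_pinj (hinj _ (hfF i)), hfdom i, hzcard i]
  · intro i j hij
    have hunion : #(z i ∪ z j : Set X) < Order.succ κ := by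
      apply lt_of_le_of_lt (Cardinal.mk_union_le _ _)
      rw [hzcard i, hzcard j, Cardinal.add_eq_self hκ]
      exact Order.lt_succ κ
    obtain ⟨g, hgF, hgdom, hgext⟩ := hF.extend_mem (f i) (hfF i) (z i ∪ z j)
      hunion (by rw [hfdom i]; exact Set.subset_union_left)
    have key : ∀ w : ↥(pran (f i) ∩ pran (f j)),
        ∃ b, f j b = some (w : κ.ord.ToType) ∧ b ∈ pdiff g (f j) := by
      rintro ⟨w, ⟨a, ha⟩, ⟨b, hb⟩⟩
      refine ⟨b, hb, ?_⟩
      have hbz : b ∈ z j := by rw [← hfdom j]; simp [pdom, hb]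
      have hbdom : b ∈ pdom g := by rw [hgdom]; exact Or.inr hbz
      refine ⟨hbdom, by simp [hb], ?_⟩
      intro hEq
      have hga : g a = some w := by
        rw [hgext a (by simp [ha]), ha]
      have hab : a = b := hinj g hgF a b (by simp [hga]) (by rw [hga, hEq, hb])
      have haz : a ∈ z i := by rw [← hfdom i]; simp [pdom, ha]
      exact hzdisj i j hij a haz (hab ▸ hbz)
    choose b hb hbdiff using key
    have hble : #(↥(pran (f i) ∩ pran (f j))) ≤ #(pdiff g (f j)) := by
      refine Cardinal.mk_le_of_injective (f := fun w => (⟨b w, hbdiff w⟩ : pdiff g (f j))) ?_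
      intro w w' h
      have hbb : b w = b w' := congrArg Subtype.val h
      have : f j (b w) = f j (b w') := by rw [hbb]
      apply Subtype.ext
      have := (hb w).symm.trans (this.trans (hb w'))
      exact Option.some.inj this
    exact lt_of_le_of_lt hble (hcoh g hgF (f j) (hfF j))

end ForestPaper
end

section
/- Assume the P-ideal dichotomy. Let λ ≥ ω₁ and let F be a coherent (ω₁, λ, 2)-forest closed under finite modifications. Then F is not Aronszajn: F contains a ⊆-well-ordered chain of order type ω₁. -/
open Cardinal Set
open scoped Classical

universe u v

namespace ForestPaper

variable {X : Type u} {μ : Type v}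

/-- `I` is a P-ideal on `Y`: an ideal containing all finite sets, consisting of
countable sets, and closed under pseudo-unions of countable subfamilies. -/
def IsPIdeal {Y : Type u} (I : Set (Set Y)) : Prop :=
  (∀ s : Set Y, s.Finite → s ∈ I) ∧
  (∀ s ∈ I, (s : Set Y).Countable) ∧
  (∀ s ∈ I, ∀ t : Set Y, t ⊆ s → t ∈ I) ∧
  (∀ s ∈ I, ∀ t ∈ I, s ∪ t ∈ I) ∧
  (∀ z : ℕ → Set Y, (∀ n, z n ∈ I) → ∃ w ∈ I, ∀ n, (z n \ w).Finite)

/-- The P-ideal dichotomy. -/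
def PIdealDichotomy : Prop :=
  ∀ (Y : Type u) (I : Set (Set Y)), IsPIdeal I →
    (∃ B : Set Y, ¬ B.Countable ∧ ∀ s : Set Y, s ⊆ B → s.Countable → s ∈ I) ∨
    (∃ P : ℕ → Set Y, (∀ y, ∃ n, y ∈ P n) ∧ ∀ n, ∀ s ∈ I, (s ∩ P n).Finite)


/-- Auxiliary: transferring a "finite disagreement with a graph" fact between two
coherent partial functions. -/
lemma transfer_fin {X : Type u} {f g : X → Option Bool}
    (hd : (pdiff g f).Finite)
    {s : Set (X × Bool)} (hg : ∀ p ∈ s, g p.1 ≠ none)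
    (hfin : {p ∈ s | f p.1 ≠ some p.2}.Finite) :
    {p ∈ s | g p.1 ≠ some p.2}.Finite := by
  have h2 : {p ∈ s | f p.1 = some p.2 ∧ g p.1 ≠ some p.2}.Finite := by
    apply Set.Finite.of_finite_image (f := Prod.fst)
    · refine hd.subset ?_
      rintro x ⟨p, ⟨hps, hf, hgne⟩, rfl⟩
      exact ⟨hg p hps, by simp [hf], by rw [hf]; exact hgne⟩
    · rintro p ⟨hps, hf, _⟩ q ⟨hqs, hq, _⟩ h
      have h2 : (p.2 : Bool) = q.2 := by
        have := hf.symm.trans (h ▸ hq : f p.1 = some q.2)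
        exact Option.some_injective _ this
      exact Prod.ext h h2
  have hsub : {p ∈ s | g p.1 ≠ some p.2} ⊆
      {p ∈ s | f p.1 ≠ some p.2} ∪ {p ∈ s | f p.1 = some p.2 ∧ g p.1 ≠ some p.2} := by
    intro p hp
    by_cases h : f p.1 = some p.2
    · exact Or.inr ⟨hp.1, h, hp.2⟩
    · exact Or.inl ⟨hp.1, h⟩
  exact (hfin.union h2).subset hsub

/-- Under PID, a coherent `(ω₁,λ,2)`-forest closed under finite modifications is
not Aronszajn: it contains a `⊆`-well-ordered chain of order type `ω₁`. -/
theorem stmt10 {X : Type u} (hPID : PIdealDichotomy.{u})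
    (hX : Order.succ ℵ₀ ≤ #X)
    (F : Set (X → Option Bool)) (hF : IsForest (Order.succ ℵ₀) F)
    (hcoh : Coherent ℵ₀ F) (hmod : ClosedMod ℵ₀ F) :
    HasChain (Order.succ ℵ₀).ord F := by
  classical
  -- basic cardinality bridges
  have hcnt : ∀ z : Set X, z.Countable → #z < Order.succ ℵ₀ := fun z hz =>
    Order.lt_succ_iff.mpr (le_aleph0_iff_set_countable.mpr hz)
  have hcnt' : ∀ z : Set X, #z < Order.succ ℵ₀ → z.Countable := fun z hz =>
    le_aleph0_iff_set_countable.mp (Order.lt_succ_iff.mp hz)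
  have hdomc : ∀ f ∈ F, (pdom f).Countable := fun f hf => hcnt' _ (hF.dom_small f hf)
  have hpd : ∀ f ∈ F, ∀ g ∈ F, (pdiff f g).Finite := fun f hf g hg =>
    Cardinal.lt_aleph0_iff_set_finite.mp (hcoh f hf g hg)
  -- select a level above each countable set
  have hex : ∀ z : Set X, z.Countable → ∃ f, f ∈ F ∧ pdom f = z := by
    intro z hz
    obtain ⟨f, hf, hd⟩ := hF.exists_dom z (hcnt z hz)
    exact ⟨f, hf, hd⟩
  choose fz hfzF hfzd using hex
  -- the ideal
  set I : Set (Set (X × Bool)) :=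
    {D | D.Countable ∧ ∃ f ∈ F, (∀ p ∈ D, p.1 ∈ pdom f) ∧
      {p ∈ D | f p.1 ≠ some p.2}.Finite} with hIdef
  have hgraphmem : ∀ (u : Set X) (hu : u.Countable) (D : Set (X × Bool)),
      D.Countable → (∀ p ∈ D, p.1 ∈ u) → (∀ p ∈ D, fz u hu p.1 = some p.2) → D ∈ I := by
    intro u hu D hDc hDdom hDg
    refine ⟨hDc, fz u hu, hfzF u hu, ?_, ?_⟩
    · intro p hp
      rw [hfzd]
      exact hDdom p hp
    · refine Set.Finite.subset (Set.finite_empty) ?_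
      rintro p ⟨hp, hne⟩
      exact absurd (hDg p hp) hne
  have hIdeal : IsPIdeal I := by
    refine ⟨?_, ?_, ?_, ?_, ?_⟩
    · -- finite sets
      intro s hs
      refine ⟨hs.countable, fz (Prod.fst '' s) ((hs.image _).countable),
        hfzF _ _, ?_, hs.subset (Set.sep_subset _ _)⟩
      intro p hp
      rw [hfzd]
      exact ⟨p, hp, rfl⟩
    · -- countable
      exact fun s hs => hs.1
    · -- downward closed
      rintro s ⟨hsc, f, hfF, hfd, hff⟩ t hts
      exact ⟨hsc.mono hts, f, hfF, fun p hp => hfd p (hts hp),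
        hff.subset fun p hp => ⟨hts hp.1, hp.2⟩⟩
    · -- unions
      rintro s ⟨hsc, f, hfF, hfd, hff⟩ t ⟨htc, g, hgF, hgd, hgf⟩
      have hzc : (pdom f ∪ pdom g).Countable := (hdomc f hfF).union (hdomc g hgF)
      set h := fz _ hzc with hh
      have hhF : h ∈ F := hfzF _ hzc
      have hhd : pdom h = pdom f ∪ pdom g := hfzd _ hzc
      refine ⟨hsc.union htc, h, hhF, ?_, ?_⟩
      · rintro p (hp | hp)
        · rw [hhd]; exact Or.inl (hfd p hp)
        · rw [hhd]; exact Or.inr (hgd p hp)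
      · have hsdom : ∀ p ∈ s, h p.1 ≠ none := by
          intro p hp
          show p.1 ∈ pdom h
          rw [hhd]
          exact Or.inl (hfd p hp)
        have htdom : ∀ p ∈ t, h p.1 ≠ none := by
          intro p hp
          show p.1 ∈ pdom h
          rw [hhd]
          exact Or.inr (hgd p hp)
        have h1 : {p ∈ s | h p.1 ≠ some p.2}.Finite :=
          transfer_fin (hpd h hhF f hfF) hsdom hff
        have h2 : {p ∈ t | h p.1 ≠ some p.2}.Finite :=
          transfer_fin (hpd h hhF g hgF) htdom hgf
        refine (h1.union h2).subset ?_
        rintro p ⟨hp | hp, hne⟩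
        · exact Or.inl ⟨hp, hne⟩
        · exact Or.inr ⟨hp, hne⟩
    · -- P-ideal property
      intro z hz
      choose f hfF hfd hff using fun n => (hz n).2
      have hw0c : (⋃ n, pdom (f n)).Countable :=
        Set.countable_iUnion fun n => hdomc _ (hfF n)
      set h := fz _ hw0c with hh
      have hhF : h ∈ F := hfzF _ hw0c
      have hhd : pdom h = ⋃ n, pdom (f n) := hfzd _ hw0c
      set w : Set (X × Bool) := {p ∈ ⋃ n, z n | h p.1 = some p.2} with hwdef
      have hwc : w.Countable :=
        ((Set.countable_iUnion fun n => (hz n).1).mono (Set.sep_subset _ _))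
      refine ⟨w, ⟨hwc, h, hhF, ?_, ?_⟩, ?_⟩
      · rintro p ⟨-, hp⟩
        show ¬ h p.1 = none
        rw [hp]; simp
      · refine Set.Finite.subset (Set.finite_empty) ?_
        rintro p ⟨⟨-, hp⟩, hne⟩
        exact absurd hp hne
      · intro n
        have hzdom : ∀ p ∈ z n, h p.1 ≠ none := by
          intro p hp
          show p.1 ∈ pdom h
          rw [hhd]
          exact Set.mem_iUnion.mpr ⟨n, hfd n p hp⟩
        have hfin : {p ∈ z n | h p.1 ≠ some p.2}.Finite :=
          transfer_fin (hpd h hhF (f n) (hfF n)) hzdom (hff n)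
        refine hfin.subset ?_
        rintro p ⟨hp, hpw⟩
        refine ⟨hp, fun hsome => hpw ⟨Set.mem_iUnion.mpr ⟨n, hp⟩, hsome⟩⟩
  rcases hPID (X × Bool) I hIdeal with ⟨B, hBnc, hBI⟩ | ⟨P, hPcov, hPorth⟩
  · -- Case 1: uncountable set all of whose countable subsets lie in I
    set Bad : Set X := {x | (x, false) ∈ B ∧ (x, true) ∈ B} with hBaddef
    have hBadfin : Bad.Finite := by
      by_contra hinf
      have hinf : Bad.Infinite := hinf
      set e := hinf.natEmbedding with he
      set u0 : Set X := Set.range (fun n => (e n : X)) with hu0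
      have hu0Bad : u0 ⊆ Bad := by rintro x ⟨n, rfl⟩; exact (e n).2
      have hu0inf : u0.Infinite :=
        Set.infinite_range_of_injective fun m n hmn => e.injective (Subtype.ext hmn)
      set D : Set (X × Bool) := u0 ×ˢ (Set.univ : Set Bool) with hD
      have hDB : D ⊆ B := by
        rintro ⟨x, c⟩ ⟨hx, -⟩
        cases c
        · exact (hu0Bad hx).1
        · exact (hu0Bad hx).2
      have hDI : D ∈ I := hBI D hDB ((Set.countable_range _).prod Set.countable_univ)
      obtain ⟨-, f, hfF, hfd, hff⟩ := hDI
      have hsub : u0 ⊆ Prod.fst '' {p ∈ D | f p.1 ≠ some p.2} := by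
        intro x hx
        by_cases h : f x = some false
        · exact ⟨(x, true), ⟨⟨hx, Set.mem_univ _⟩, by rw [h]; simp⟩, rfl⟩
        · exact ⟨(x, false), ⟨⟨hx, Set.mem_univ _⟩, h⟩, rfl⟩
      exact hu0inf ((hff.image _).subset hsub)
    set B' : Set (X × Bool) := B \ (Bad ×ˢ (Set.univ : Set Bool)) with hB'def
    have hB'nc : ¬ B'.Countable := by
      intro hc
      refine hBnc ((hc.union ((hBadfin.prod Set.finite_univ).countable)).mono ?_)
      intro p hp
      by_cases h : p ∈ Bad ×ˢ (Set.univ : Set Bool)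
      · exact Or.inr h
      · exact Or.inl ⟨hp, h⟩
    have hfun : ∀ x b b', (x, b) ∈ B' → (x, b') ∈ B' → b = b' := by
      intro x b b' h1 h2
      by_contra hne
      cases b <;> cases b'
      · exact hne rfl
      · exact h1.2 ⟨⟨h1.1, h2.1⟩, Set.mem_univ _⟩
      · exact h1.2 ⟨⟨h2.1, h1.1⟩, Set.mem_univ _⟩
      · exact hne rfl
    set Y₀ : Set X := {x | ∃ c, (x, c) ∈ B'} with hY₀def
    set val : X → Option Bool :=
      fun x => if h : ∃ c, (x, c) ∈ B' then some h.choose else none with hvaldef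
    have hval : ∀ x c, (x, c) ∈ B' → val x = some c := by
      intro x c h
      have hx : ∃ c, (x, c) ∈ B' := ⟨c, h⟩
      rw [hvaldef]
      simp only [dif_pos hx]
      exact congrArg _ (hfun x _ c hx.choose_spec h)
    have hvalnone : ∀ x, x ∉ Y₀ → val x = none := by
      intro x hx
      rw [hvaldef]
      exact dif_neg hx
    have hvalY : ∀ x ∈ Y₀, val x ≠ none := by
      rintro x ⟨c, hc⟩
      rw [hval x c hc]; simp
    have hY₀nc : ¬ Y₀.Countable := by
      intro hc
      refine hB'nc ((hc.prod (Set.countable_univ)).mono ?_)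
      rintro ⟨x, c⟩ hp
      exact ⟨⟨c, hp⟩, Set.mem_univ _⟩
    have hY₀card : Order.succ ℵ₀ ≤ #Y₀ := by
      refine Order.succ_le_of_lt ?_
      rw [← not_le, le_aleph0_iff_set_countable]
      exact hY₀nc
    have hcard : #((Order.succ ℵ₀ : Cardinal.{u}).ord.ToType) ≤ #Y₀ := by
      rw [Cardinal.mk_toType, Cardinal.card_ord]
      exact hY₀card
    obtain ⟨ι⟩ : Nonempty ((Order.succ ℵ₀ : Cardinal.{u}).ord.ToType ↪ Y₀) :=
      Cardinal.le_def _ _ |>.mp hcard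
    set uSet : (Order.succ ℵ₀ : Cardinal.{u}).ord.ToType → Set X :=
      fun i => (fun k => ((ι k : Y₀) : X)) '' Set.Iic i with huSetdef
    have huc : ∀ i, (uSet i).Countable := by
      intro i
      refine Set.Countable.image ?_ _
      have : Set.Iic i = insert i (Set.Iio i) := by
        ext k; simp [le_iff_lt_or_eq, or_comm]
      rw [this]
      refine Set.Countable.insert _ ?_
      exact le_aleph0_iff_set_countable.mp (Order.lt_succ_iff.mp (Cardinal.mk_Iio_ord_toType i))
    have huY : ∀ i, uSet i ⊆ Y₀ := by
      rintro i x ⟨k, -, rfl⟩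
      exact (ι k).2
    set c : (Order.succ ℵ₀ : Cardinal.{u}).ord.ToType → X → Option Bool :=
      fun i x => if x ∈ uSet i then val x else none with hcdef
    have hcd : ∀ i, pdom (c i) = uSet i := by
      intro i
      ext x
      by_cases h : x ∈ uSet i
      · simp only [pdom, Set.mem_setOf_eq, hcdef, if_pos h]
        exact iff_of_true (hvalY x (huY i h)) h
      · simp only [pdom, Set.mem_setOf_eq, hcdef, if_neg h]
        exact iff_of_false (fun hh => hh rfl) h
    have hcval : ∀ i x, x ∈ uSet i → c i x = val x := by
      intro i x h
      rw [hcdef]; exact if_pos h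
    have hcF : ∀ i, c i ∈ F := by
      intro i
      set fw := fz (uSet i) (huc i) with hfw
      have hfwF : fw ∈ F := hfzF _ _
      have hfwd : pdom fw = uSet i := hfzd _ _
      set D : Set (X × Bool) := {p | p.1 ∈ uSet i ∧ p ∈ B'} with hDdef
      have hDI : D ∈ I := by
        refine hBI D (fun p hp => hp.2.1) (((huc i).prod Set.countable_univ).mono ?_)
        rintro ⟨x, b⟩ hp
        exact ⟨hp.1, Set.mem_univ _⟩
      obtain ⟨-, f, hfF, hfd, hff⟩ := hDI
      have hdiff : {x | fw x ≠ c i x} ⊆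
          (Prod.fst '' {p ∈ D | f p.1 ≠ some p.2}) ∪ pdiff fw f := by
        intro x hx
        by_cases hxw : x ∈ uSet i
        · obtain ⟨cv, hcv⟩ := huY i hxw
          have hcx : c i x = some cv := by rw [hcval i x hxw, hval x cv hcv]
          have hne : fw x ≠ some cv := by rw [← hcx]; exact hx
          by_cases hfx : f x = some cv
          · refine Or.inr ⟨?_, ?_, ?_⟩
            · show x ∈ pdom fw
              rw [hfwd]; exact hxw
            · rw [hfx]; simp
            · rw [hfx]; exact hne
          · exact Or.inl ⟨(x, cv), ⟨⟨hxw, hcv⟩, hfx⟩, rfl⟩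
        · exfalso
          have h1 : fw x = none := by
            by_contra h
            exact hxw (hfwd ▸ h : x ∈ uSet i)
          have h2 : c i x = none := by rw [hcdef]; exact if_neg hxw
          exact hx (h1.trans h2.symm)
      have hfin : {x | fw x ≠ c i x}.Finite :=
        ((hff.image _).union (hpd fw hfwF f hfF)).subset hdiff
      refine hmod fw hfwF (c i) ?_ (Cardinal.lt_aleph0_iff_set_finite.mpr hfin)
      rw [hcd i, hfwd]
    refine ⟨c, hcF, ?_⟩
    intro i j hij
    have hmono : uSet i ⊆ uSet j := by
      rintro x ⟨k, hk, rfl⟩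
      exact ⟨k, le_trans hk (le_of_lt hij), rfl⟩
    constructor
    · intro x hx
      have hxi : x ∈ uSet i := by
        by_contra h
        exact hx (by rw [hcdef]; exact if_neg h)
      rw [hcval j x (hmono hxi), hcval i x hxi]
    · intro h
      set x₀ : X := ((ι j : Y₀) : X) with hx₀
      have hxj : x₀ ∈ uSet j := ⟨j, Set.mem_Iic.mpr le_rfl, rfl⟩
      have hxi : x₀ ∉ uSet i := by
        rintro ⟨k, hk, hkx⟩
        have : k = j := ι.injective (Subtype.ext hkx)
        exact absurd (this ▸ hk : j ≤ i) (not_le_of_gt hij)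
      have h1 : c i x₀ = none := by rw [hcdef]; exact if_neg hxi
      have h2 : c j x₀ ≠ none := by
        rw [hcval j x₀ hxj]
        exact hvalY x₀ (ι j).2
      exact h2 (by rw [← h, h1])
  · -- Case 2: countable orthogonal decomposition — impossible
    exfalso
    choose nf hnf using fun x => hPcov (x, false)
    choose nt hnt using fun x => hPcov (x, true)
    obtain ⟨q, hq⟩ : ∃ q : ℕ × ℕ, ¬ ((fun x => (nf x, nt x)) ⁻¹' {q}).Countable := by
      by_contra hall
      push_neg at hall
      have huniv : (Set.univ : Set X).Countable := by
        have : (Set.univ : Set X) = ⋃ q : ℕ × ℕ, (fun x => (nf x, nt x)) ⁻¹' {q} := by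
          ext x
          simp only [Set.mem_univ, Set.mem_iUnion, Set.mem_preimage, Set.mem_singleton_iff,
            true_iff]
          exact ⟨(nf x, nt x), rfl⟩
        rw [this]
        exact Set.countable_iUnion hall
      have : Countable X := Set.countable_univ_iff.mp huniv
      have h1 : #X ≤ ℵ₀ := Cardinal.mk_le_aleph0
      exact absurd (hX.trans h1) (not_le_of_gt (Order.lt_succ ℵ₀))
    have hTinf : ((fun x => (nf x, nt x)) ⁻¹' {q}).Infinite := by
      intro hfin
      exact hq hfin.countable
    set e := hTinf.natEmbedding with he
    set u : Set X := Set.range (fun n => (e n : X)) with hu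
    have huT : ∀ x ∈ u, nf x = q.1 ∧ nt x = q.2 := by
      rintro x ⟨n, rfl⟩
      have := (e n).2
      simp only [Set.mem_preimage, Set.mem_singleton_iff] at this
      exact ⟨congrArg Prod.fst this, congrArg Prod.snd this⟩
    have huc : u.Countable := Set.countable_range _
    have huinf : u.Infinite :=
      Set.infinite_range_of_injective fun m n hmn => e.injective (Subtype.ext hmn)
    set f := fz u huc with hf
    have hfd : pdom f = u := hfzd _ _
    set D : Set (X × Bool) := {p | p.1 ∈ u ∧ f p.1 = some p.2} with hDdef
    have hDI : D ∈ I := by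
      refine hgraphmem u huc D ((huc.prod Set.countable_univ).mono ?_)
        (fun p hp => hp.1) (fun p hp => hp.2)
      rintro ⟨x, b⟩ hp
      exact ⟨hp.1, Set.mem_univ _⟩
    have hsub : u ⊆ Prod.fst '' ((D ∩ P q.1) ∪ (D ∩ P q.2)) := by
      intro x hx
      have hxd : x ∈ pdom f := by rw [hfd]; exact hx
      obtain ⟨cv, hcv⟩ := Option.ne_none_iff_exists'.mp hxd
      cases cv with
      | false =>
          refine ⟨(x, false), Or.inl ⟨⟨hx, hcv⟩, ?_⟩, rfl⟩
          have := hnf x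
          rw [(huT x hx).1] at this
          exact this
      | true =>
          refine ⟨(x, true), Or.inr ⟨⟨hx, hcv⟩, ?_⟩, rfl⟩
          have := hnt x
          rw [(huT x hx).2] at this
          exact this
    have hfin : ((D ∩ P q.1) ∪ (D ∩ P q.2)).Finite :=
      (hPorth q.1 D hDI).union (hPorth q.2 D hDI)
    exact huinf ((hfin.image _).subset hsub)
end ForestPaper
end

section
/- Assume the P-ideal dichotomy. Let n < ω, λ ≥ ω₁, and let F be a coherent (ω₁, λ, n)-forest closed under finite modifications. Then F contains a ⊆-well-ordered chain of order type ω₁ (F is not Aronszajn). -/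
open Cardinal Set
open scoped Classical

universe u v

namespace ForestPaper

variable {X : Type u} {μ : Type v}

/-! ### Auxiliary lemmas for `stmt11` -/

section Stmt11Aux

variable {n : ℕ}

lemma mk_lt_succ_aleph0_iff {α : Type u} (s : Set α) :
    Cardinal.mk s < Order.succ ℵ₀ ↔ s.Countable := by
  rw [Order.lt_succ_iff, le_aleph0_iff_set_countable]

lemma pdiff_finite {F : Set (X → Option μ)} (hcoh : Coherent ℵ₀ F)
    {f g : X → Option μ} (hf : f ∈ F) (hg : g ∈ F) : (pdiff f g).Finite :=
  lt_aleph0_iff_set_finite.mp (hcoh f hf g hg)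

/-- `P` is a good set for value `v`: every member of `F` defined on a countable
subset of `P` is almost constantly equal to `v` there. -/
def Good (F : Set (X → Option (ULift.{u} (Fin n)))) (P : Set X)
    (v : ULift.{u} (Fin n)) : Prop :=
  ∀ b : Set X, b ⊆ P → b.Countable → ∀ f ∈ F, b ⊆ pdom f →
    {x ∈ b | f x ≠ some v}.Finite

lemma pid_step (hPID : PIdealDichotomy.{u})
    {F : Set (X → Option (ULift.{u} (Fin n)))}
    (hF : IsForest (Order.succ ℵ₀) F) (hcoh : Coherent ℵ₀ F)
    (B : Set X) (hB : ¬ B.Countable) (v : ULift.{u} (Fin n)) :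
    (∃ B' ⊆ B, ¬ B'.Countable ∧ ∀ f ∈ F, {x ∈ B' | f x = some v}.Finite) ∨
    (∃ P ⊆ B, ¬ P.Countable ∧ Good F P v) := by
  classical
  set I : Set (Set ↥B) :=
    {s | s.Countable ∧ ∀ f ∈ F, {x ∈ s | f ↑x = some v}.Finite} with hI
  have domCount : ∀ f ∈ F, (pdom f).Countable := by
    intro f hf
    exact (mk_lt_succ_aleph0_iff _).mp (hF.dom_small f hf)
  have hPI : IsPIdeal I := by
    refine ⟨?_, ?_, ?_, ?_, ?_⟩
    · intro s hs
      exact ⟨hs.countable, fun f hf => hs.subset (sep_subset _ _)⟩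
    · intro s hs; exact hs.1
    · intro s hs t hts
      exact ⟨hs.1.mono hts, fun f hf =>
        (hs.2 f hf).subset (fun x hx => ⟨hts hx.1, hx.2⟩)⟩
    · intro s hs t ht
      refine ⟨hs.1.union ht.1, fun f hf => ?_⟩
      refine ((hs.2 f hf).union (ht.2 f hf)).subset ?_
      rintro x ⟨hx | hx, hfx⟩
      · exact Or.inl ⟨hx, hfx⟩
      · exact Or.inr ⟨hx, hfx⟩
    · intro z hz
      set u : Set ↥B := ⋃ k, z k with hu
      have huc : u.Countable := countable_iUnion fun k => (hz k).1
      have hu'c : (Subtype.val '' u : Set X).Countable := huc.image _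
      obtain ⟨f₀, hf₀F, hf₀dom⟩ :=
        hF.exists_dom (Subtype.val '' u) ((mk_lt_succ_aleph0_iff _).mpr hu'c)
      set w : Set ↥B := {x | x ∈ u ∧ f₀ ↑x ≠ some v} with hw
      have hwI : w ∈ I := by
        refine ⟨huc.mono (fun x hx => hx.1), fun f hf => ?_⟩
        have hsub : {x ∈ w | f ↑x = some v} ⊆ Subtype.val ⁻¹' (pdiff f f₀) := by
          rintro x ⟨⟨hxu, hxv⟩, hfx⟩
          have hxd : (x : X) ∈ pdom f₀ := by
            rw [hf₀dom]; exact ⟨x, hxu, rfl⟩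
          refine ⟨by simp [hfx], hxd, ?_⟩
          intro hEq
          exact hxv (hEq ▸ hfx)
        exact (((pdiff_finite hcoh hf hf₀F).preimage
          (Subtype.val_injective.injOn)).subset hsub)
      refine ⟨w, hwI, fun k => ?_⟩
      have : z k \ w ⊆ {x ∈ z k | f₀ ↑x = some v} := by
        rintro x ⟨hxz, hxw⟩
        refine ⟨hxz, ?_⟩
        by_contra hne
        exact hxw ⟨mem_iUnion.mpr ⟨k, hxz⟩, hne⟩
      exact ((hz k).2 f₀ hf₀F).subset this
  rcases hPID ↥B I hPI with ⟨C, hCunc, hC⟩ | ⟨Pk, hcover, horth⟩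
  · left
    refine ⟨Subtype.val '' C, Subtype.coe_image_subset B C, ?_, ?_⟩
    · intro hcc
      exact hCunc (((hcc.preimage Subtype.val_injective)).mono
        (subset_preimage_image _ _))
    · intro f hf
      set s₀ : Set ↥B := {x | x ∈ C ∧ f ↑x = some v} with hs₀
      have hs₀c : s₀.Countable := by
        have : s₀ ⊆ Subtype.val ⁻¹' (pdom f) := by
          rintro x ⟨-, hfx⟩
          simp [pdom, hfx]
        exact ((domCount f hf).preimage Subtype.val_injective).mono this
      have hs₀I : s₀ ∈ I := hC s₀ (fun x hx => hx.1) hs₀c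
      have hs₀fin : s₀.Finite := by
        refine (hs₀I.2 f hf).subset ?_
        intro x hx; exact ⟨hx, hx.2⟩
      refine (hs₀fin.image Subtype.val).subset ?_
      rintro x ⟨⟨y, hyC, rfl⟩, hfx⟩
      exact ⟨y, ⟨hyC, hfx⟩, rfl⟩
  · right
    have hex : ∃ k, ¬ (Subtype.val '' Pk k : Set X).Countable := by
      by_contra hall
      push_neg at hall
      apply hB
      have : B ⊆ ⋃ k, Subtype.val '' Pk k := by
        intro x hx
        obtain ⟨k, hk⟩ := hcover ⟨x, hx⟩
        exact mem_iUnion.mpr ⟨k, ⟨x, hx⟩, hk, rfl⟩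
      exact (countable_iUnion hall).mono this
    obtain ⟨k, hk⟩ := hex
    refine ⟨Subtype.val '' Pk k, Subtype.coe_image_subset B _, hk, ?_⟩
    intro b hbP hbc f hf hbdom
    set s : Set X := {x ∈ b | f x ≠ some v} with hs
    set s₁ : Set ↥B := Subtype.val ⁻¹' s with hs₁
    have hs₁I : s₁ ∈ I := by
      refine ⟨(hbc.mono (sep_subset _ _)).preimage Subtype.val_injective, ?_⟩
      intro g hg
      have hsub : {x ∈ s₁ | g ↑x = some v} ⊆ Subtype.val ⁻¹' (pdiff g f) := by
        rintro x ⟨⟨hxb, hxv⟩, hgx⟩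
        have hxd : (x : X) ∈ pdom f := hbdom hxb
        refine ⟨by simp [hgx], hxd, ?_⟩
        intro hEq
        exact hxv (hEq ▸ hgx)
      exact ((pdiff_finite hcoh hg hf).preimage Subtype.val_injective.injOn).subset hsub
    have hfin : (s₁ ∩ Pk k).Finite := horth k s₁ hs₁I
    refine (hfin.image Subtype.val).subset ?_
    intro x hx
    obtain ⟨y, hyP, hyx⟩ := hbP hx.1
    exact ⟨y, ⟨show (y : X) ∈ s from hyx ▸ hx, hyP⟩, hyx⟩

lemma exists_good (hPID : PIdealDichotomy.{u})
    {F : Set (X → Option (ULift.{u} (Fin n)))}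
    (hF : IsForest (Order.succ ℵ₀) F) (hcoh : Coherent ℵ₀ F) :
    ∀ (k : ℕ) (V : Finset (ULift.{u} (Fin n))), V.card ≤ k →
      ∀ B : Set X, ¬ B.Countable →
      (∀ b : Set X, b ⊆ B → b.Countable → ∀ f ∈ F, b ⊆ pdom f →
        {x ∈ b | ∀ w ∈ V, f x ≠ some w}.Finite) →
      ∃ (P : Set X) (v : ULift.{u} (Fin n)), ¬ P.Countable ∧ Good F P v := by
  intro k
  induction k with
  | zero =>
    intro V hVk B hB hInv
    exfalso
    have hV : V = ∅ := Finset.card_eq_zero.mp (Nat.le_zero.mp hVk)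
    have hBinf : B.Infinite := fun hfin => hB hfin.countable
    let e := hBinf.natEmbedding
    set b : Set X := Set.range (fun m => ((e m : X))) with hb
    have hbB : b ⊆ B := by rintro x ⟨m, rfl⟩; exact (e m).2
    have hbc : b.Countable := countable_range _
    have hbinf : b.Infinite :=
      infinite_range_of_injective (Subtype.val_injective.comp e.injective)
    obtain ⟨f, hfF, hfdom⟩ := hF.exists_dom b ((mk_lt_succ_aleph0_iff _).mpr hbc)
    have := hInv b hbB hbc f hfF (by rw [hfdom])
    refine hbinf ?_
    refine this.subset ?_
    intro x hx
    exact ⟨hx, by simp [hV]⟩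
  | succ k ih =>
    intro V hVk B hB hInv
    rcases V.eq_empty_or_nonempty with hV | ⟨v, hv⟩
    · exact ih V (by simp [hV]) B hB hInv
    rcases pid_step hPID hF hcoh B hB v with
      ⟨B', hB'B, hB'unc, hsmall⟩ | ⟨P, hPB, hPunc, hgood⟩
    · refine ih (V.erase v) ?_ B' hB'unc ?_
      · have := Finset.card_erase_of_mem hv
        have hpos : 1 ≤ V.card := Finset.card_pos.mpr ⟨v, hv⟩
        omega
      · intro b hbB' hbc f hf hbdom
        have h1 := hInv b (hbB'.trans hB'B) hbc f hf hbdom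
        have h2 := hsmall f hf
        refine (h1.union h2).subset ?_
        rintro x ⟨hxb, hxall⟩
        by_cases hfv : f x = some v
        · exact Or.inr ⟨hbB' hxb, hfv⟩
        · refine Or.inl ⟨hxb, fun w hw => ?_⟩
          by_cases hwv : w = v
          · rw [hwv]; exact hfv
          · exact hxall w (Finset.mem_erase.mpr ⟨hwv, hw⟩)
    · exact ⟨P, v, hPunc, hgood⟩

end Stmt11Aux

/-- Under PID, for any `n < ω`, a coherent `(ω₁,λ,n)`-forest closed under finite
modifications contains a `⊆`-well-ordered chain of order type `ω₁`. -/
theorem stmt11 {X : Type u} (hPID : PIdealDichotomy.{u}) (n : ℕ)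
    (hX : Order.succ ℵ₀ ≤ #X)
    (F : Set (X → Option (ULift.{u} (Fin n)))) (hF : IsForest (Order.succ ℵ₀) F)
    (hcoh : Coherent ℵ₀ F) (hmod : ClosedMod ℵ₀ F) :
    HasChain (Order.succ ℵ₀).ord F := by
    classical
  -- `X` is uncountable
  have hXunc : ¬ (univ : Set X).Countable := by
    intro hc
    have h1 : #(univ : Set X) ≤ ℵ₀ := le_aleph0_iff_set_countable.mpr hc
    rw [Cardinal.mk_univ] at h1
    exact absurd h1 (not_le.mpr (lt_of_lt_of_le (Order.lt_succ _) hX))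
  -- find an uncountable good set `P` with value `v`
  have hInv : ∀ b : Set X, b ⊆ univ → b.Countable → ∀ f ∈ F, b ⊆ pdom f →
      {x ∈ b | ∀ w ∈ (Finset.univ : Finset (ULift.{u} (Fin n))), f x ≠ some w}.Finite := by
    intro b _ _ f _ hbdom
    refine finite_empty.subset ?_
    rintro x ⟨hxb, hall⟩
    have hx : f x ≠ none := hbdom hxb
    obtain ⟨y, hy⟩ := Option.ne_none_iff_exists'.mp hx
    exact absurd hy (hall y (Finset.mem_univ y))
  obtain ⟨P, v, hPunc, hgood⟩ :=
    exists_good hPID hF hcoh (Finset.univ.card) Finset.univ le_rfl univ hXunc hInv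
  -- embed `ω₁` into `P`
  have hPcard : #((Order.succ ℵ₀ : Cardinal.{u}).ord.ToType) ≤ #(↥P) := by
    rw [Cardinal.mk_toType, Cardinal.card_ord]
    refine Order.succ_le_of_lt (lt_of_not_ge fun h => ?_)
    exact hPunc (le_aleph0_iff_set_countable.mp h)
  obtain ⟨e⟩ := Cardinal.le_def _ _ |>.mp hPcard
  -- the chain: constant-`v` partial functions on initial segments of the embedding
  set b : (Order.succ ℵ₀ : Cardinal.{u}).ord.ToType → Set X :=
    fun i => (fun j => ((e j : X))) '' Set.Iio i with hbdef
  have hbP : ∀ i, b i ⊆ P := by rintro i x ⟨j, -, rfl⟩; exact (e j).2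
  have hbc : ∀ i, (b i).Countable := by
    intro i
    have : (Set.Iio i).Countable :=
      (mk_lt_succ_aleph0_iff _).mp (Cardinal.mk_Iio_ord_toType i)
    exact this.image _
  have hbmono : ∀ i j, i < j → b i ⊆ b j := by
    rintro i j hij x ⟨k, hk, rfl⟩
    exact ⟨k, lt_trans hk hij, rfl⟩
  set c : (Order.succ ℵ₀ : Cardinal.{u}).ord.ToType → (X → Option (ULift.{u} (Fin n))) :=
    fun i x => if x ∈ b i then some v else none with hcdef
  have hcdom : ∀ i, pdom (c i) = b i := by
    intro i
    ext x
    by_cases hx : x ∈ b i <;> simp [pdom, hcdef, hx]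
  have hcmem : ∀ i, c i ∈ F := by
    intro i
    obtain ⟨f, hfF, hfdom⟩ := hF.exists_dom (b i) ((mk_lt_succ_aleph0_iff _).mpr (hbc i))
    have hfin : {x ∈ b i | f x ≠ some v}.Finite :=
      hgood (b i) (hbP i) (hbc i) f hfF (by rw [hfdom])
    refine hmod f hfF (c i) (by rw [hcdom i, hfdom]) ?_
    rw [lt_aleph0_iff_set_finite]
    refine hfin.subset ?_
    intro x hx
    by_cases hxb : x ∈ b i
    · refine ⟨hxb, ?_⟩
      intro hfx
      exact hx (by simp [hcdef, hxb, hfx])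
    · exfalso
      have hfx : f x = none := by
        by_contra hne
        exact hxb (hfdom ▸ hne)
      exact hx (by simp [hcdef, hxb, hfx])
  refine ⟨c, hcmem, ?_⟩
  intro i j hij
  constructor
  · intro x hx
    have hxb : x ∈ b i := by
      by_contra hxb
      exact hx (by simp [hcdef, hxb])
    have hxbj : x ∈ b j := hbmono i j hij hxb
    simp [hcdef, hxb, hxbj]
  · intro hEq
    have hxbj : (e i : X) ∈ b j := ⟨i, hij, rfl⟩
    have hxbi : (e i : X) ∉ b i := by
      rintro ⟨k, hk, hk2⟩
      have : k = i := e.injective (Subtype.val_injective hk2)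
      exact absurd (this ▸ hk) (lt_irrefl i)
    have h1 : c i (e i) = none := by simp [hcdef, hxbi]
    have h2 : c j (e i) = some v := by simp [hcdef, hxbj]
    rw [hEq, h2] at h1
    exact Option.some_ne_none v h1
end ForestPaper
end

section
/- Let κ be a regular cardinal and let F be a Suslin (κ,λ,μ)-forest. Then F is κ-distributive: for any δ < κ and any sequence ⟨A_α : α < δ⟩ of maximal antichains contained in F, there exists a single maximal antichain in F refining every A_α (namely F_z for a suitable z of size < κ). -/
open Cardinal Set
open scoped Classical

universe u v

namespace ForestPaper

variable {X : Type u} {μ : Type v}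

/-- A Suslin `(κ,λ,μ)`-forest is `κ`-distributive: fewer than `κ` many maximal
antichains admit a common maximal refinement. -/
theorem stmt12 {X μ ι : Type u} (κ : Cardinal.{u}) (hκ : κ.IsRegular)
    (F : Set (X → Option μ)) (hF : IsForest κ F)
    (hSus : ∀ A, IsAntichainIn F A → #A < κ)
    (hι : #ι < κ) (A : ι → Set (X → Option μ))
    (hA : ∀ i, IsMaxAntichainIn F (A i)) :
    ∃ M, IsMaxAntichainIn F M ∧ ∀ f ∈ M, ∀ i, ∃ g ∈ A i, Ext f g := by
  classical
  -- the union of all domains of antichain members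
  set z : Set X := ⋃ p : Σ i, ↥(A i), pdom (p.2 : X → Option μ) with hz
  have hzsub : ∀ i, ∀ g ∈ A i, pdom g ⊆ z := by
    intro i g hg
    exact Set.subset_iUnion (fun p : Σ i, ↥(A i) => pdom (p.2 : X → Option μ)) ⟨i, ⟨g, hg⟩⟩
  have hzcard : #z < κ := by
    refine lt_of_le_of_lt Cardinal.mk_iUnion_le_sum_mk ?_
    refine Cardinal.sum_lt_of_isRegular hκ ?_ ?_
    · have : #(Σ i, ↥(A i)) = Cardinal.sum fun i => #(A i) := Cardinal.mk_sigma _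
      rw [this]
      exact Cardinal.sum_lt_of_isRegular hκ hι fun i => hSus _ (hA i).1
    · rintro ⟨i, g, hg⟩
      exact hF.dom_small g ((hA i).1.1 hg)
  refine ⟨{f ∈ F | pdom f = z}, ⟨⟨fun f hf => hf.1, ?_⟩, ?_⟩, ?_⟩
  · -- antichain
    rintro f ⟨hfF, hfz⟩ g ⟨hgF, hgz⟩ hne ⟨h, _, hhf, hhg⟩
    apply hne
    funext x
    by_cases hx : x ∈ z
    · have hfx : f x ≠ none := by rw [← hfz] at hx; exact hx
      have hgx : g x ≠ none := by rw [← hgz] at hx; exact hx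
      rw [← hhf x hfx, ← hhg x hgx]
    · have hfx : f x = none := by
        by_contra h'; exact hx (hfz ▸ h')
      have hgx : g x = none := by
        by_contra h'; exact hx (hgz ▸ h')
      rw [hfx, hgx]
  · -- maximal
    intro f hfF
    have hcard : #(pdom f ∪ z : Set X) < κ := by
      refine lt_of_le_of_lt (Cardinal.mk_union_le _ _) ?_
      exact Cardinal.add_lt_of_lt hκ.1 (hF.dom_small f hfF) hzcard
    obtain ⟨g, hgF, hgdom, hgext⟩ :=
      hF.extend_mem f hfF (pdom f ∪ z) hcard Set.subset_union_left
    have hzg : z ⊆ pdom g := hgdom ▸ Set.subset_union_right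
    have hres : pres g z ∈ F := hF.restrict_mem g hgF z hzg
    have hresdom : pdom (pres g z) = z := by
      ext x
      simp only [pdom, pres, Set.mem_setOf_eq]
      constructor
      · intro h'
        by_contra hx
        simp [hx] at h'
      · intro hx
        simp only [hx, if_true]
        exact hzg hx
    refine ⟨pres g z, ⟨hres, hresdom⟩, g, hgF, hgext, ?_⟩
    intro x hx
    simp only [pres] at hx ⊢
    by_cases h' : x ∈ z
    · simp [h']
    · simp [h'] at hx
  · -- refinement
    rintro f ⟨hfF, hfz⟩ i
    obtain ⟨g, hg, h, hhF, hhf, hhg⟩ := (hA i).2 f hfF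
    refine ⟨g, hg, fun x hgx => ?_⟩
    have hxz : x ∈ z := hzsub i g hg hgx
    have hfx : f x ≠ none := by rw [← hfz] at hxz; exact hxz
    rw [← hhf x hfx, hhg x hgx]
end ForestPaper
end

section
/- Let κ be a regular cardinal and let F be a Suslin (κ,λ,μ)-forest. Then for any sequence ⟨A_α : α < δ⟩ of maximal antichains in F with δ < κ, the set z = ⋃_α ⋃{dom(f) : f ∈ A_α} has size < κ, and every g ∈ F with dom(g) = z extends exactly one element of each A_α. -/
open Cardinal Set
open scoped Classical

universe u v

namespace ForestPaper

variable {X : Type u} {μ : Type v}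

/-- In a Suslin `(κ,λ,μ)`-forest, for fewer than `κ` many maximal antichains
`⟨A_i⟩`, the union `z` of the domains of their members has size `< κ`, and every
member of `F` with domain `z` extends exactly one element of each `A_i`. -/
theorem stmt13 {X μ ι : Type u} (κ : Cardinal.{u}) (hκ : κ.IsRegular)
    (F : Set (X → Option μ)) (hF : IsForest κ F)
    (hSus : ∀ A, IsAntichainIn F A → #A < κ)
    (hι : #ι < κ) (A : ι → Set (X → Option μ))
    (hA : ∀ i, IsMaxAntichainIn F (A i)) :
    #({x | ∃ i, ∃ f ∈ A i, x ∈ pdom f} : Set X) < κ ∧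
    ∀ g ∈ F, pdom g = {x | ∃ i, ∃ f ∈ A i, x ∈ pdom f} →
      ∀ i, ∃! a, a ∈ A i ∧ Ext g a := by
  have hz : ({x | ∃ i, ∃ f ∈ A i, x ∈ pdom f} : Set X) =
      ⋃ i, ⋃ f ∈ A i, pdom f := by
    ext x; simp [mem_iUnion]
  refine ⟨?_, ?_⟩
  · rw [hz]
    rw [Cardinal.card_iUnion_lt_iff_forall_of_isRegular hκ hι]
    intro i
    rw [Cardinal.card_biUnion_lt_iff_forall_of_isRegular hκ (hSus _ (hA i).1)]
    intro a ha
    exact hF.dom_small a ((hA i).1.1 ha)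
  · intro g hg hdom i
    obtain ⟨a, ha, h, hhF, hhg, hha⟩ := (hA i).2 g hg
    have hga : Ext g a := by
      intro x hx
      have hxz : x ∈ pdom g := by
        rw [hdom]; exact ⟨i, a, ha, hx⟩
      rw [← hhg x hxz, hha x hx]
    refine ⟨a, ⟨ha, hga⟩, ?_⟩
    rintro b ⟨hb, hgb⟩
    by_contra hne
    exact (hA i).1.2 b hb a ha hne ⟨g, hg, hgb, hga⟩
end ForestPaper
end

section
/- Let κ be a regular cardinal with 2^{<κ} = κ and let λ ≥ κ. The partial order ℙ consisting of partial functions p assigning, to fewer than κ many sets z ⊆ λ of size ≤ κ, a partial injective function from z into κ defined at fewer than κ points — ordered by p ≤ q iff dom(p) ⊇ dom(q), p(z) ⊇ q(z) for all z ∈ dom(q), and whenever z₀, z₁ ∈ dom(q) and α ∈ z₀ ∩ z₁ is outside dom(q(z₀)) ∪ dom(q(z₁)) but α ∈ dom(p(z₀)), then α ∈ dom(p(z₁)) and p(z₀)(α) = p(z₁)(α) — is a transitive ordering that is < κ-closed (every decreasing chain of length < κ has a lower bound) and has the κ⁺-chain condition. -/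
open Cardinal Set
open scoped Classical

universe u v

namespace ForestPaper

variable {X : Type u} {μ : Type v}

/-- A condition of the forcing: `p` assigns to fewer than `κ` many sets `z ⊆ X`
of size `≤ κ` a partial injective function from `z` into `κ` defined at fewer
than `κ` points. -/
def CondOK {X : Type u} (κ : Cardinal.{u})
    (p : Set X → Option (X → Option κ.ord.ToType)) : Prop :=
  #{z | p z ≠ none} < κ ∧
  ∀ z f, p z = some f → #z ≤ κ ∧ pdom f ⊆ z ∧ #(pdom f) < κ ∧ PInj f

/-- The ordering of the forcing of Theorem (injections): `p ≤ q` iff the domain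
of `p` contains that of `q`, `p(z)` extends `q(z)` for `z ∈ dom q`, and for
`z₀, z₁ ∈ dom q` and `α ∈ z₀ ∩ z₁` outside `dom q(z₀) ∪ dom q(z₁)`, if `p(z₀)`
is defined at `α` then so is `p(z₁)`, with the same value. -/
def CondLE {X K : Type u} (p q : Set X → Option (X → Option K)) : Prop :=
  (∀ z, q z ≠ none → p z ≠ none) ∧
  (∀ z f g, p z = some f → q z = some g → Ext f g) ∧
  (∀ z₀ z₁ g₀ g₁ f₀ f₁ α, q z₀ = some g₀ → q z₁ = some g₁ →
    α ∈ z₀ → α ∈ z₁ → g₀ α = none → g₁ α = none →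
    p z₀ = some f₀ → p z₁ = some f₁ → f₀ α ≠ none → f₁ α = f₀ α)


def app {K : Type u} (p : Set X → Option (X → Option K)) (z : Set X) : X → Option K :=
  (p z).getD fun _ => none

theorem app_eq {K : Type u} {p : Set X → Option (X → Option K)} {z g} (h : p z = some g) :
    app p z = g := by simp [app, h]

theorem ne_none_of_app {K : Type u} {p : Set X → Option (X → Option K)} {z x}
    (h : app p z x ≠ none) : p z ≠ none := by
  intro h0; apply h; simp [app, h0]

section CardLemmas
variable {κ : Cardinal.{u}}

theorem two_pow_le (hpow : (2 : Cardinal.{u}) ^< κ = κ) {c : Cardinal.{u}} (hc : c < κ) :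
    (2 : Cardinal.{u}) ^ c ≤ κ := hpow ▸ Cardinal.le_powerlt 2 hc

theorem bounded_of_small (hκ : κ.IsRegular) {s : Set κ.ord.ToType} (hs : #s < κ) :
    ∃ b, ∀ x ∈ s, x < b := by
  by_contra h
  push_neg at h
  have hub : IsCofinal s := by
    intro b
    obtain ⟨x, hx, hxb⟩ := h b
    exact ⟨x, hx, hxb⟩
  have hc := Order.cof_le hub
  rw [Ordinal.cof_toType, hκ.cof_ord] at hc
  exact absurd hs (not_lt.mpr hc)

theorem mk_K (κ : Cardinal.{u}) : #κ.ord.ToType = κ := by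
  rw [Cardinal.mk_toType, Cardinal.card_ord]

theorem mk_union_le_kappa (hκ : κ.IsRegular) {ι β : Type u} (hι : #ι ≤ κ)
    (f : ι → Set β) (hf : ∀ i, #(f i) ≤ κ) : #(⋃ i, f i) ≤ κ := by
  calc #(⋃ i, f i) ≤ Cardinal.sum (fun i => #(f i)) := Cardinal.mk_iUnion_le_sum_mk
    _ ≤ Cardinal.sum (fun _ : ι => κ) := Cardinal.sum_le_sum _ _ hf
    _ = #ι * κ := Cardinal.sum_const' _ _
    _ ≤ κ * κ := mul_le_mul_left hι κ
    _ = κ := Cardinal.mul_eq_self hκ.aleph0_le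

theorem mk_small_subsets (hκ : κ.IsRegular) (hpow : (2 : Cardinal.{u}) ^< κ = κ) :
    #{t : Set κ.ord.ToType | #t < κ} ≤ κ := by
  have hsub : {t : Set κ.ord.ToType | #t < κ} ⊆
      ⋃ b : κ.ord.ToType, {t : Set κ.ord.ToType | t ⊆ Iio b} := by
    intro t ht
    obtain ⟨b, hb⟩ := bounded_of_small hκ ht
    exact mem_iUnion.mpr ⟨b, fun x hx => hb x hx⟩
  refine (Cardinal.mk_le_mk_of_subset hsub).trans ?_
  apply mk_union_le_kappa hκ (le_of_eq (mk_K κ))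
  intro b
  have hemb : Function.Injective
      (fun t : {t : Set κ.ord.ToType | t ⊆ Iio b} => (Subtype.val ⁻¹' t.1 : Set (Iio b))) := by
    intro t₁ t₂ he
    apply Subtype.ext
    ext x
    constructor
    · intro hx
      have hxb : x ∈ Iio b := t₁.2 hx
      have h2 : (⟨x, hxb⟩ : Iio b) ∈ Subtype.val ⁻¹' t₁.1 := hx
      have he' : (Subtype.val ⁻¹' t₁.1 : Set (Iio b)) = Subtype.val ⁻¹' t₂.1 := he
      rw [he'] at h2
      exact h2
    · intro hx
      have hxb : x ∈ Iio b := t₂.2 hx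
      have h2 : (⟨x, hxb⟩ : Iio b) ∈ Subtype.val ⁻¹' t₂.1 := hx
      have he' : (Subtype.val ⁻¹' t₁.1 : Set (Iio b)) = Subtype.val ⁻¹' t₂.1 := he
      rw [← he'] at h2
      exact h2
  refine (Cardinal.mk_le_of_injective hemb).trans ?_
  rw [Cardinal.mk_set]
  exact two_pow_le hpow (Cardinal.mk_Iio_ord_toType b)

theorem mk_small_subsets_of (hκ : κ.IsRegular) (hpow : (2 : Cardinal.{u}) ^< κ = κ)
    {β : Type u} {Y : Set β} (hY : #Y ≤ κ) :
    #{s : Set β | s ⊆ Y ∧ #s < κ} ≤ κ := by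
  have hle : #Y ≤ #κ.ord.ToType := by rw [mk_K κ]; exact hY
  obtain ⟨e⟩ := (Cardinal.le_def _ _).mp hle
  set G : {s : Set β | s ⊆ Y ∧ #s < κ} → {t : Set κ.ord.ToType | #t < κ} :=
    fun s => ⟨e '' (Subtype.val ⁻¹' s.1), by
      refine lt_of_le_of_lt (Cardinal.mk_image_le.trans ?_) s.2.2
      exact Cardinal.mk_preimage_of_injective _ _ Subtype.val_injective⟩ with hG
  have hinj : Function.Injective G := by
    intro s₁ s₂ he
    have hee : e '' (Subtype.val ⁻¹' s₁.1) = e '' (Subtype.val ⁻¹' s₂.1) :=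
      congrArg Subtype.val he
    apply Subtype.ext
    ext x
    constructor
    · intro hx
      have hxY : x ∈ Y := s₁.2.1 hx
      have : e ⟨x, hxY⟩ ∈ e '' (Subtype.val ⁻¹' s₁.1) := ⟨⟨x, hxY⟩, hx, rfl⟩
      rw [hee] at this
      obtain ⟨y, hy, hey⟩ := this
      have := e.injective hey
      rw [this] at hy
      exact hy
    · intro hx
      have hxY : x ∈ Y := s₂.2.1 hx
      have : e ⟨x, hxY⟩ ∈ e '' (Subtype.val ⁻¹' s₂.1) := ⟨⟨x, hxY⟩, hx, rfl⟩
      rw [← hee] at this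
      obtain ⟨y, hy, hey⟩ := this
      have := e.injective hey
      rw [this] at hy
      exact hy
  exact (Cardinal.mk_le_of_injective hinj).trans (mk_small_subsets hκ hpow)



end CardLemmas

section ChainCondition

variable {V : Type u}

/-- domain of a condition -/
def sdom (p : Set X → Option (X → Option V)) : Set (Set X) := {z | p z ≠ none}

/-- union of the domains of the local functions of `p` -/
def suppD (p : Set X → Option (X → Option V)) : Set X :=
  ⋃ z ∈ sdom p, pdom (app p z)

/-- union of the ranges of the local functions of `p` -/
def suppV (p : Set X → Option (X → Option V)) : Set V :=
  ⋃ z ∈ sdom p, pran (app p z)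

def bigY (S : Set (Set X → Option (X → Option V))) : Set X :=
  ⋃ p ∈ S, (suppD p ∪ ⋃ z ∈ sdom p, (z : Set X))

def bigZ (S : Set (Set X → Option (X → Option V))) : Set (Set X) :=
  ⋃ p ∈ S, sdom p

def bigV (S : Set (Set X → Option (X → Option V))) : Set V :=
  ⋃ p ∈ S, suppV p

/-- trace data: a domain root, a value root, and a set of (set, local trace) pairs -/
def Rq (A : Set (Set X → Option (X → Option V)))
    (d : Set X × Set V × Set (Set X × (X → Option V)))
    (q : Set X → Option (X → Option V)) : Prop :=
  q ∈ A ∧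
  (∀ zf ∈ d.2.2, q zf.1 ≠ none → ∀ α ∈ d.1, app q zf.1 α = zf.2 α) ∧
  (∀ zf ∈ d.2.2, q zf.1 ≠ none → ∀ β γ, app q zf.1 β = some γ → γ ∈ d.2.1 → zf.2 β = some γ) ∧
  (∀ zf ∈ d.2.2, ∀ zf' ∈ d.2.2, q zf.1 ≠ none → q zf'.1 ≠ none → ∀ α, α ∉ d.1 →
      app q zf.1 α ≠ none → app q zf'.1 α ≠ none → app q zf.1 α = app q zf'.1 α) ∧
  (∀ zf ∈ d.2.2, q zf.1 ≠ none → ∀ z', q z' ≠ none → ∀ α β, α ∉ d.1 →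
      app q zf.1 α ≠ none → app q zf.1 α = app q z' β → α = β)

noncomputable def gfun (A : Set (Set X → Option (X → Option V)))
    (d : Set X × Set V × Set (Set X × (X → Option V))) :
    Set X → Option (X → Option V) :=
  if h : ∃ q, Rq A d q then h.choose else fun _ => none

def good (κ : Cardinal.{u}) (S : Set (Set X → Option (X → Option V)))
    (d : Set X × Set V × Set (Set X × (X → Option V))) : Prop :=
  d.1 ⊆ bigY S ∧ #d.1 < κ ∧ #d.2.1 < κ ∧ #d.2.2 < κ ∧
  ∀ zf ∈ d.2.2, zf.1 ∈ bigZ S ∧ pdom zf.2 ⊆ d.1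

noncomputable def step (κ : Cardinal.{u}) (A S : Set (Set X → Option (X → Option V))) :
    Set (Set X → Option (X → Option V)) :=
  S ∪ gfun A '' {d | good κ S d}

noncomputable def stages (κ : Cardinal.{u}) (A : Set (Set X → Option (X → Option V))) :
    κ.ord.ToType → Set (Set X → Option (X → Option V)) :=
  (wellFoundedLT_toType κ.ord).wf.fix
    (fun i IH => step κ A (⋃ j, ⋃ h : j < i, IH j h))

noncomputable def bigB (κ : Cardinal.{u}) (A : Set (Set X → Option (X → Option V))) :
    Set (Set X → Option (X → Option V)) :=
  ⋃ i, stages κ A i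

theorem stages_eq (κ : Cardinal.{u}) (A : Set (Set X → Option (X → Option V)))
    (i : κ.ord.ToType) :
    stages κ A i = step κ A (⋃ j, ⋃ _ : j < i, stages κ A j) := by
  exact WellFounded.fix_eq _ _ i

theorem stages_mono {κ : Cardinal.{u}} {A : Set (Set X → Option (X → Option V))}
    {i j : κ.ord.ToType} (h : j < i) : stages κ A j ⊆ stages κ A i := by
  rw [stages_eq κ A i]
  intro x hx
  exact Or.inl (mem_iUnion.mpr ⟨j, mem_iUnion.mpr ⟨h, hx⟩⟩)

end ChainCondition

section Counting

variable {κ : Cardinal.{u}}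

theorem mk_pran_le {V : Type u} (f : X → Option V) : #(pran f) ≤ #(pdom f) := by
  have hinj : Function.Injective (fun y : pran f => (⟨y.2.choose, by
      have := y.2.choose_spec
      simp only [pdom, mem_setOf_eq, this]
      exact fun h => nomatch h⟩ : pdom f)) := by
    intro y₁ y₂ he
    have h1 := y₁.2.choose_spec
    have h2 := y₂.2.choose_spec
    have : y₁.2.choose = y₂.2.choose := congrArg Subtype.val he
    apply Subtype.ext
    rw [this] at h1
    rw [h1] at h2
    exact Option.some.inj h2
  exact Cardinal.mk_le_of_injective hinj

theorem mk_biUnion_lt (hκ : κ.IsRegular) {β γ : Type u} {s : Set β} (hs : #s < κ)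
    (f : β → Set γ) (hf : ∀ b ∈ s, #(f b) < κ) : #(⋃ b ∈ s, f b) < κ := by
  rw [biUnion_eq_iUnion, Cardinal.card_iUnion_lt_iff_forall_of_isRegular hκ hs]
  rintro ⟨b, hb⟩
  exact hf b hb

theorem mk_biUnion_le (hκ : κ.IsRegular) {β γ : Type u} {s : Set β} (hs : #s ≤ κ)
    (f : β → Set γ) (hf : ∀ b ∈ s, #(f b) ≤ κ) : #(⋃ b ∈ s, f b) ≤ κ := by
  rw [biUnion_eq_iUnion]
  exact mk_union_le_kappa hκ hs _ fun b => hf b.1 b.2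

theorem sdom_lt {p : Set X → Option (X → Option κ.ord.ToType)} (hp : CondOK κ p) :
    #(sdom p) < κ := hp.1

theorem app_small {p : Set X → Option (X → Option κ.ord.ToType)} (hp : CondOK κ p)
    {z : Set X} (hz : z ∈ sdom p) :
    Cardinal.mk z ≤ κ ∧ pdom (app p z) ⊆ z ∧ #(pdom (app p z)) < κ ∧ PInj (app p z) := by
  obtain ⟨g, hg⟩ := Option.ne_none_iff_exists'.mp hz
  rw [app_eq hg]
  exact hp.2 z g hg

theorem suppD_lt (hκ : κ.IsRegular) {p : Set X → Option (X → Option κ.ord.ToType)}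
    (hp : CondOK κ p) : #(suppD p) < κ :=
  mk_biUnion_lt hκ (sdom_lt hp) _ fun z hz => (app_small hp hz).2.2.1

theorem suppV_lt (hκ : κ.IsRegular) {p : Set X → Option (X → Option κ.ord.ToType)}
    (hp : CondOK κ p) : #(suppV p) < κ :=
  mk_biUnion_lt hκ (sdom_lt hp) _ fun z hz =>
    (mk_pran_le (app p z)).trans_lt (app_small hp hz).2.2.1

theorem bigY_le (hκ : κ.IsRegular) {S : Set (Set X → Option (X → Option κ.ord.ToType))}
    (hS : #S ≤ κ) (hOKS : ∀ p ∈ S, CondOK κ p) : #(bigY S) ≤ κ := by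
  apply mk_biUnion_le hκ hS
  intro p hp
  refine (Cardinal.mk_union_le _ _).trans ?_
  have h1 : #(suppD p) ≤ κ := (suppD_lt hκ (hOKS p hp)).le
  have h2 : #(⋃ z ∈ sdom p, (z : Set X)) ≤ κ :=
    mk_biUnion_le hκ (sdom_lt (hOKS p hp)).le _ fun z hz => (app_small (hOKS p hp) hz).1
  calc #(suppD p) + #(⋃ z ∈ sdom p, (z : Set X)) ≤ κ + κ := add_le_add h1 h2
    _ = κ := Cardinal.add_eq_self hκ.aleph0_le

theorem bigZ_le (hκ : κ.IsRegular) {S : Set (Set X → Option (X → Option κ.ord.ToType))}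
    (hS : #S ≤ κ) (hOKS : ∀ p ∈ S, CondOK κ p) : #(bigZ S) ≤ κ :=
  mk_biUnion_le hκ hS _ fun p hp => (sdom_lt (hOKS p hp)).le

theorem subset_bigY_of_mem_bigZ {S : Set (Set X → Option (X → Option V))} {z : Set X}
    (hz : z ∈ bigZ S) : (z : Set X) ⊆ bigY S := by
  obtain ⟨p, hp, hzp⟩ := mem_iUnion₂.mp hz
  intro x hx
  exact mem_iUnion₂.mpr ⟨p, hp, Or.inr (mem_iUnion₂.mpr ⟨z, hzp, hx⟩)⟩

theorem suppD_subset_bigY {S : Set (Set X → Option (X → Option V))}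
    {q : Set X → Option (X → Option V)} (hq : q ∈ S) : suppD q ⊆ bigY S := by
  intro x hx
  exact mem_iUnion₂.mpr ⟨q, hq, Or.inl hx⟩

theorem sdom_subset_bigZ {S : Set (Set X → Option (X → Option V))}
    {q : Set X → Option (X → Option V)} (hq : q ∈ S) : sdom q ⊆ bigZ S := by
  intro z hz
  exact mem_iUnion₂.mpr ⟨q, hq, hz⟩

theorem suppV_subset_bigV {S : Set (Set X → Option (X → Option V))}
    {q : Set X → Option (X → Option V)} (hq : q ∈ S) : suppV q ⊆ bigV S := by
  intro x hx
  exact mem_iUnion₂.mpr ⟨q, hq, hx⟩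

theorem mk_fns_le (hκ : κ.IsRegular) (hpow : (2 : Cardinal.{u}) ^< κ = κ)
    {Y : Set X} (hY : #Y ≤ κ) :
    #{f : X → Option κ.ord.ToType | pdom f ⊆ Y ∧ #(pdom f) < κ} ≤ κ := by
  set YK : Set (X × κ.ord.ToType) := Y ×ˢ (univ : Set κ.ord.ToType) with hYK
  have hYKle : #YK ≤ κ := by
    rw [hYK]
    rw [Cardinal.mk_congr (Equiv.Set.prod Y (univ : Set κ.ord.ToType))]
    rw [Cardinal.mk_prod, Cardinal.lift_id, Cardinal.lift_id, Cardinal.mk_univ, mk_K κ]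
    calc #Y * κ ≤ κ * κ := mul_le_mul_left hY κ
      _ = κ := Cardinal.mul_eq_self hκ.aleph0_le
  set G : {f : X → Option κ.ord.ToType | pdom f ⊆ Y ∧ #(pdom f) < κ} →
      {s : Set (X × κ.ord.ToType) | s ⊆ YK ∧ #s < κ} := fun f =>
    ⟨{xv | f.1 xv.1 = some xv.2}, by
      constructor
      · rintro ⟨x, v⟩ hxv
        refine ⟨f.2.1 ?_, mem_univ v⟩
        intro hc
        have hxv' : f.1 (x, v).1 = some (x, v).2 := hxv
        rw [hc] at hxv'
        exact nomatch hxv'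
      · refine lt_of_le_of_lt ?_ f.2.2
        have hinj : Function.Injective
            (fun xv : {xv : X × κ.ord.ToType | f.1 xv.1 = some xv.2} =>
              (⟨xv.1.1, by
                have h : f.1 xv.1.1 = some xv.1.2 := xv.2
                intro hc
                rw [hc] at h
                exact nomatch h⟩ : pdom f.1)) := by
          rintro ⟨⟨x₁, v₁⟩, h₁⟩ ⟨⟨x₂, v₂⟩, h₂⟩ he
          have hx : x₁ = x₂ := congrArg Subtype.val he
          subst hx
          have : v₁ = v₂ := by
            have h₁' : f.1 x₁ = some v₁ := h₁
            have h₂' : f.1 x₁ = some v₂ := h₂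
            rw [h₁'] at h₂'
            exact Option.some.inj h₂'
          subst this
          rfl
        exact Cardinal.mk_le_of_injective hinj⟩ with hG
  have hGinj : Function.Injective G := by
    intro f g he
    have hee : {xv : X × κ.ord.ToType | f.1 xv.1 = some xv.2} =
        {xv : X × κ.ord.ToType | g.1 xv.1 = some xv.2} := congrArg Subtype.val he
    apply Subtype.ext
    funext x
    cases hfx : f.1 x with
    | some v =>
      have hm : (x, v) ∈ {xv : X × κ.ord.ToType | f.1 xv.1 = some xv.2} := hfx
      rw [hee] at hm
      exact (hm : g.1 x = some v).symm
    | none =>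
      cases hgx : g.1 x with
      | some w =>
        have hm : (x, w) ∈ {xv : X × κ.ord.ToType | g.1 xv.1 = some xv.2} := hgx
        rw [← hee] at hm
        have : f.1 x = some w := hm
        rw [hfx] at this
        exact nomatch this
      | none => rfl
  exact (Cardinal.mk_le_of_injective hGinj).trans (mk_small_subsets_of hκ hpow hYKle)

end Counting

section Stages

variable {κ : Cardinal.{u}}

theorem mk_good_le (hκ : κ.IsRegular) (hpow : (2 : Cardinal.{u}) ^< κ = κ)
    {S : Set (Set X → Option (X → Option κ.ord.ToType))}
    (hS : #S ≤ κ) (hOKS : ∀ p ∈ S, CondOK κ p) :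
    #{d : Set X × Set κ.ord.ToType × Set (Set X × (X → Option κ.ord.ToType)) |
      good κ S d} ≤ κ := by
  have hYle : #(bigY S) ≤ κ := bigY_le hκ hS hOKS
  have hZle : #(bigZ S) ≤ κ := bigZ_le hκ hS hOKS
  set FnY : Set (X → Option κ.ord.ToType) :=
    {f | pdom f ⊆ bigY S ∧ #(pdom f) < κ} with hFnY
  have hFnle : #FnY ≤ κ := mk_fns_le hκ hpow hYle
  set EP : Set (Set X × (X → Option κ.ord.ToType)) :=
    {zf | zf.1 ∈ bigZ S ∧ zf.2 ∈ FnY} with hEP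
  have hEPle : #EP ≤ κ := by
    have hinj : Function.Injective (fun zf : EP =>
        ((⟨zf.1.1, zf.2.1⟩, ⟨zf.1.2, zf.2.2⟩) : bigZ S × FnY)) := by
      rintro ⟨⟨z₁, f₁⟩, h₁⟩ ⟨⟨z₂, f₂⟩, h₂⟩ he
      apply Subtype.ext
      have h1 : z₁ = z₂ := congrArg (fun t => (t.1 : Set X)) he
      have h2 : f₁ = f₂ := congrArg (fun t => (t.2 : X → Option κ.ord.ToType)) he
      rw [Prod.ext_iff]
      exact ⟨h1, h2⟩
    refine (Cardinal.mk_le_of_injective hinj).trans ?_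
    rw [Cardinal.mk_prod, Cardinal.lift_id, Cardinal.lift_id]
    calc #(bigZ S) * #FnY ≤ κ * κ := mul_le_mul' hZle hFnle
      _ = κ := Cardinal.mul_eq_self hκ.aleph0_le
  set P1 : Set (Set X) := {s | s ⊆ bigY S ∧ #s < κ} with hP1
  set P2 : Set (Set κ.ord.ToType) := {t | #t < κ} with hP2
  set P3 : Set (Set (Set X × (X → Option κ.ord.ToType))) := {E | E ⊆ EP ∧ #E < κ} with hP3
  have h1 : #P1 ≤ κ := mk_small_subsets_of hκ hpow hYle
  have h2 : #P2 ≤ κ := mk_small_subsets hκ hpow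
  have h3 : #P3 ≤ κ := mk_small_subsets_of hκ hpow hEPle
  have hinj : Function.Injective (fun d : {d : Set X × Set κ.ord.ToType ×
      Set (Set X × (X → Option κ.ord.ToType)) | good κ S d} =>
      ((⟨d.1.1, d.2.1, d.2.2.1⟩ : P1), (⟨d.1.2.1, d.2.2.2.1⟩ : P2),
        (⟨d.1.2.2, by
          constructor
          · intro zf hzf
            have hg := d.2.2.2.2.2 zf hzf
            exact ⟨hg.1, hg.2.trans d.2.1, (Cardinal.mk_le_mk_of_subset hg.2).trans_lt
              d.2.2.1⟩
          · exact d.2.2.2.2.1⟩ : P3))) := by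
    rintro ⟨⟨Δ₁, V₁, E₁⟩, hd₁⟩ ⟨⟨Δ₂, V₂, E₂⟩, hd₂⟩ he
    apply Subtype.ext
    have e1 : Δ₁ = Δ₂ := congrArg (fun t => (t.1 : Set X)) he
    have e2 : V₁ = V₂ := congrArg (fun t => (t.2.1 : Set κ.ord.ToType)) he
    have e3 : E₁ = E₂ := congrArg (fun t => (t.2.2 : Set (Set X × (X → Option κ.ord.ToType)))) he
    simp only [Prod.ext_iff]
    exact ⟨e1, e2, e3⟩
  refine (Cardinal.mk_le_of_injective hinj).trans ?_
  rw [Cardinal.mk_prod, Cardinal.lift_id, Cardinal.lift_id,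
    Cardinal.mk_prod, Cardinal.lift_id, Cardinal.lift_id]
  calc #P1 * (#P2 * #P3) ≤ κ * (κ * κ) := by
        exact mul_le_mul' h1 (mul_le_mul' h2 h3)
    _ = κ := by rw [Cardinal.mul_eq_self hκ.aleph0_le, Cardinal.mul_eq_self hκ.aleph0_le]

theorem junk_OK (hκ : κ.IsRegular) :
    CondOK κ (fun _ => none : Set X → Option (X → Option κ.ord.ToType)) := by
  constructor
  · have : {z : Set X | (none : Option (X → Option κ.ord.ToType)) ≠ none} = ∅ := by
      ext z; simp
    rw [this]
    simpa using aleph0_pos.trans_le hκ.aleph0_le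
  · intro z f h
    exact nomatch h

theorem gfun_OK (hκ : κ.IsRegular) {A : Set (Set X → Option (X → Option κ.ord.ToType))}
    (hOKA : ∀ p ∈ A, CondOK κ p) (d : Set X × Set κ.ord.ToType ×
      Set (Set X × (X → Option κ.ord.ToType))) : CondOK κ (gfun A d) := by
  rw [gfun]
  by_cases h : ∃ q, Rq A d q
  · rw [dif_pos h]
    exact hOKA _ h.choose_spec.1
  · rw [dif_neg h]
    exact junk_OK hκ

theorem stages_OK (hκ : κ.IsRegular) {A : Set (Set X → Option (X → Option κ.ord.ToType))}
    (hOKA : ∀ p ∈ A, CondOK κ p) (i : κ.ord.ToType) :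
    ∀ p ∈ stages κ A i, CondOK κ p := by
  induction i using ((wellFoundedLT_toType κ.ord).wf).induction with
  | _ i IH =>
    rw [stages_eq]
    rintro p (hp | ⟨d, _, rfl⟩)
    · obtain ⟨j, hj⟩ := mem_iUnion.mp hp
      obtain ⟨hji, hpj⟩ := mem_iUnion.mp hj
      exact IH j hji p hpj
    · exact gfun_OK hκ hOKA d

theorem stages_le (hκ : κ.IsRegular) (hpow : (2 : Cardinal.{u}) ^< κ = κ)
    {A : Set (Set X → Option (X → Option κ.ord.ToType))}
    (hOKA : ∀ p ∈ A, CondOK κ p) (i : κ.ord.ToType) :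
    #(stages κ A i) ≤ κ := by
  induction i using ((wellFoundedLT_toType κ.ord).wf).induction with
  | _ i IH =>
    rw [stages_eq]
    have hU : #(⋃ j, ⋃ _ : j < i, stages κ A j) ≤ κ := by
      apply mk_union_le_kappa hκ (le_of_eq (mk_K κ))
      intro j
      by_cases hji : j < i
      · have : (⋃ _ : j < i, stages κ A j) = stages κ A j := by
          ext x; simp [hji]
        rw [this]
        exact IH j hji
      · have : (⋃ _ : j < i, stages κ A j) = ∅ := by
          ext x; simp [hji]
        rw [this, Cardinal.mk_emptyCollection]
        exact zero_le
    have hUOK : ∀ p ∈ (⋃ j, ⋃ _ : j < i, stages κ A j), CondOK κ p := by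
      intro p hp
      obtain ⟨j, hj⟩ := mem_iUnion.mp hp
      obtain ⟨hji, hpj⟩ := mem_iUnion.mp hj
      exact stages_OK hκ hOKA j p hpj
    rw [step]
    refine (Cardinal.mk_union_le _ _).trans ?_
    have himg : #(gfun A '' {d | good κ (⋃ j, ⋃ _ : j < i, stages κ A j) d}) ≤ κ :=
      Cardinal.mk_image_le.trans (mk_good_le hκ hpow hU hUOK)
    calc _ ≤ κ + κ := add_le_add hU himg
      _ = κ := Cardinal.add_eq_self hκ.aleph0_le

theorem bigB_le (hκ : κ.IsRegular) (hpow : (2 : Cardinal.{u}) ^< κ = κ)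
    {A : Set (Set X → Option (X → Option κ.ord.ToType))}
    (hOKA : ∀ p ∈ A, CondOK κ p) : #(bigB κ A) ≤ κ :=
  mk_union_le_kappa hκ (le_of_eq (mk_K κ)) _ (stages_le hκ hpow hOKA)

theorem bigB_OK (hκ : κ.IsRegular) {A : Set (Set X → Option (X → Option κ.ord.ToType))}
    (hOKA : ∀ p ∈ A, CondOK κ p) : ∀ p ∈ bigB κ A, CondOK κ p := by
  intro p hp
  obtain ⟨i, hi⟩ := mem_iUnion.mp hp
  exact stages_OK hκ hOKA i p hi

end Stages

section Closure2

variable {κ : Cardinal.{u}}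

theorem bigY_mono {S T : Set (Set X → Option (X → Option V))} (h : S ⊆ T) :
    bigY S ⊆ bigY T := by
  intro x hx
  obtain ⟨p, hp, hxp⟩ := mem_iUnion₂.mp hx
  exact mem_iUnion₂.mpr ⟨p, h hp, hxp⟩

theorem bigZ_mono {S T : Set (Set X → Option (X → Option V))} (h : S ⊆ T) :
    bigZ S ⊆ bigZ T := by
  intro x hx
  obtain ⟨p, hp, hxp⟩ := mem_iUnion₂.mp hx
  exact mem_iUnion₂.mpr ⟨p, h hp, hxp⟩

theorem mem_bigY_stage {A : Set (Set X → Option (X → Option V))} {x : X}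
    (hx : x ∈ bigY (bigB κ A)) : ∃ i, x ∈ bigY (stages κ A i) := by
  obtain ⟨p, hp, hxp⟩ := mem_iUnion₂.mp hx
  obtain ⟨i, hi⟩ := mem_iUnion.mp hp
  exact ⟨i, mem_iUnion₂.mpr ⟨p, hi, hxp⟩⟩

theorem mem_bigZ_stage {A : Set (Set X → Option (X → Option V))} {z : Set X}
    (hz : z ∈ bigZ (bigB κ A)) : ∃ i, z ∈ bigZ (stages κ A i) := by
  obtain ⟨p, hp, hzp⟩ := mem_iUnion₂.mp hz
  obtain ⟨i, hi⟩ := mem_iUnion.mp hp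
  exact ⟨i, mem_iUnion₂.mpr ⟨p, hi, hzp⟩⟩

theorem gfun_mem_bigB (hκ : κ.IsRegular) {A : Set (Set X → Option (X → Option κ.ord.ToType))}
    (d : Set X × Set κ.ord.ToType × Set (Set X × (X → Option κ.ord.ToType)))
    (hd1 : d.1 ⊆ bigY (bigB κ A)) (hd2 : #d.1 < κ) (hd3 : #d.2.1 < κ) (hd4 : #d.2.2 < κ)
    (hd5 : ∀ zf ∈ d.2.2, zf.1 ∈ bigZ (bigB κ A) ∧ pdom zf.2 ⊆ d.1) :
    gfun A d ∈ bigB κ A := by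
  have hst1 : ∀ α : d.1, ∃ i, (α : X) ∈ bigY (stages κ A i) :=
    fun α => mem_bigY_stage (hd1 α.2)
  have hst2 : ∀ zf : d.2.2, ∃ i, (zf : Set X × (X → Option κ.ord.ToType)).1 ∈
      bigZ (stages κ A i) := fun zf => mem_bigZ_stage (hd5 zf.1 zf.2).1
  set st1 : d.1 → κ.ord.ToType := fun α => (hst1 α).choose with hst1d
  set st2 : d.2.2 → κ.ord.ToType := fun zf => (hst2 zf).choose with hst2d
  set R : Set κ.ord.ToType := range st1 ∪ range st2 with hR
  have hRsm : #R < κ := by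
    refine (Cardinal.mk_union_le _ _).trans_lt (Cardinal.add_lt_of_lt hκ.aleph0_le ?_ ?_)
    · exact Cardinal.mk_range_le.trans_lt hd2
    · exact Cardinal.mk_range_le.trans_lt hd4
  obtain ⟨b, hb⟩ := bounded_of_small hκ hRsm
  set U : Set (Set X → Option (X → Option κ.ord.ToType)) :=
    ⋃ j, ⋃ _ : j < b, stages κ A j with hU
  have hsub : ∀ j, j < b → stages κ A j ⊆ U := by
    intro j hj x hx
    exact mem_iUnion.mpr ⟨j, mem_iUnion.mpr ⟨hj, hx⟩⟩
  have hgood : good κ U d := by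
    refine ⟨?_, hd2, hd3, hd4, ?_⟩
    · intro α hα
      have h1 : (α : X) ∈ bigY (stages κ A (st1 ⟨α, hα⟩)) := (hst1 ⟨α, hα⟩).choose_spec
      have h2 : st1 ⟨α, hα⟩ < b := hb _ (Or.inl (mem_range_self _))
      exact bigY_mono (hsub _ h2) h1
    · intro zf hzf
      refine ⟨?_, (hd5 zf hzf).2⟩
      have h1 : zf.1 ∈ bigZ (stages κ A (st2 ⟨zf, hzf⟩)) := (hst2 ⟨zf, hzf⟩).choose_spec
      have h2 : st2 ⟨zf, hzf⟩ < b := hb _ (Or.inr (mem_range_self _))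
      exact bigZ_mono (hsub _ h2) h1
  have : gfun A d ∈ stages κ A b := by
    rw [stages_eq]
    exact Or.inr ⟨d, hgood, rfl⟩
  exact mem_iUnion.mpr ⟨b, this⟩

end Closure2

section Amalg

variable {κ : Cardinal.{u}}

theorem mem_suppD_of_app {c : Set X → Option (X → Option V)} {z : Set X} {α : X}
    (h : app c z α ≠ none) : α ∈ suppD c :=
  mem_iUnion₂.mpr ⟨z, ne_none_of_app h, h⟩

theorem mem_suppV_of_app {c : Set X → Option (X → Option V)} {z : Set X} {α : X} {γ : V}
    (h : app c z α = some γ) : γ ∈ suppV c :=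
  mem_iUnion₂.mpr ⟨z, ne_none_of_app (z := z) (x := α)
    (by rw [h]; exact fun hc => nomatch hc), ⟨α, h⟩⟩

theorem mem_z_of_app {c : Set X → Option (X → Option κ.ord.ToType)} (hOK : CondOK κ c)
    {z : Set X} {α : X} (h : app c z α ≠ none) : α ∈ z :=
  (app_small hOK (ne_none_of_app h)).2.1 h

theorem amalg (hκ : κ.IsRegular)
    {A : Set (Set X → Option (X → Option κ.ord.ToType))}
    {p q : Set X → Option (X → Option κ.ord.ToType)}
    (hpOK : CondOK κ p) (hqOK : CondOK κ q)
    {Y : Set X} {W : Set κ.ord.ToType} {Δ : Set X} {Δv : Set κ.ord.ToType}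
    {E : Set (Set X × (X → Option κ.ord.ToType))}
    (hq1 : ∀ z ∈ sdom q, (z : Set X) ⊆ Y)
    (hq2 : suppD q ⊆ Y)
    (hq3 : suppV q ⊆ W)
    (hΔ : ∀ α, α ∈ suppD p → α ∈ Y → α ∈ Δ)
    (hΔv : ∀ γ, γ ∈ suppV p → γ ∈ W → γ ∈ Δv)
    (hE : ∀ z, z ∈ sdom p → z ∈ sdom q → (z, pres (app p z) Δ) ∈ E)
    (hRq : Rq A (Δ, Δv, E) q) :
    ∃ r, CondOK κ r ∧ CondLE r p ∧ CondLE r q := by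
  -- derived facts
  have hPQ : ∀ z ∈ sdom q, ∀ α, app p z α ≠ none → α ∈ Δ := by
    intro z hzq α hα
    exact hΔ α (mem_suppD_of_app hα) (hq1 z hzq (mem_z_of_app hpOK hα))
  have hK3 : ∀ z, z ∈ sdom p → z ∈ sdom q → ∀ α, α ∈ Δ → app q z α = app p z α := by
    intro z hzp hzq α hα
    have h := hRq.2.1 (z, pres (app p z) Δ) (hE z hzp hzq) hzq α hα
    rw [h]
    simp only [pres, if_pos hα]
  have hK4 : ∀ z, z ∈ sdom p → z ∈ sdom q → ∀ β γ, app q z β = some γ → γ ∈ Δv →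
      app p z β = some γ := by
    intro z hzp hzq β γ hβ hγ
    have h := hRq.2.2.1 (z, pres (app p z) Δ) (hE z hzp hzq) hzq β γ hβ hγ
    have h' : pres (app p z) Δ β = some γ := h
    by_cases hβΔ : β ∈ Δ
    · rw [show pres (app p z) Δ β = app p z β from if_pos hβΔ] at h'; exact h'
    · rw [show pres (app p z) Δ β = none from if_neg hβΔ] at h'; exact nomatch h'
  have hK5 : ∀ z z', z ∈ sdom p → z ∈ sdom q → z' ∈ sdom p → z' ∈ sdom q →
      ∀ α, α ∉ Δ → app q z α ≠ none → app q z' α ≠ none → app q z α = app q z' α := by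
    intro z z' hzp hzq hz'p hz'q α hαΔ h1 h2
    exact hRq.2.2.2.1 (z, pres (app p z) Δ) (hE z hzp hzq)
      (z', pres (app p z') Δ) (hE z' hz'p hz'q) hzq hz'q α hαΔ h1 h2
  have hK6 : ∀ z, z ∈ sdom p → z ∈ sdom q → ∀ z' ∈ sdom q, ∀ α β, α ∉ Δ →
      app q z α ≠ none → app q z α = app q z' β → α = β := by
    intro z hzp hzq z' hz'q α β hαΔ h1 h2
    exact hRq.2.2.2.2 (z, pres (app p z) Δ) (hE z hzp hzq) hzq z' hz'q α β hαΔ h1 h2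
  have hVcol : ∀ {z z' : Set X} {β β' : X} {γ : κ.ord.ToType},
      app p z β = some γ → app q z' β' = some γ → γ ∈ Δv := by
    intro z z' β β' γ h1 h2
    exact hΔv γ (mem_suppV_of_app h1) (hq3 (mem_suppV_of_app h2))
  -- the gluing value function
  set Wd : X → Option κ.ord.ToType := fun α =>
    if h : ∃ z, z ∈ sdom p ∧ z ∈ sdom q ∧ app q z α ≠ none ∧ app p z α = none
    then app q h.choose α else none with hWdd
  have hWd_spec : ∀ α, Wd α ≠ none → ∃ z, z ∈ sdom p ∧ z ∈ sdom q ∧ app q z α ≠ none ∧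
      app p z α = none ∧ Wd α = app q z α := by
    intro α h
    rw [hWdd] at h ⊢
    by_cases hex : ∃ z, z ∈ sdom p ∧ z ∈ sdom q ∧ app q z α ≠ none ∧ app p z α = none
    · obtain ⟨h1, h2, h3, h4⟩ := hex.choose_spec
      exact ⟨hex.choose, h1, h2, h3, h4, by simp only [dif_pos hex]⟩
    · simp only [dif_neg hex] at h
      exact absurd rfl h
  have hWd_notΔ : ∀ α, Wd α ≠ none → α ∉ Δ := by
    intro α h hαΔ
    obtain ⟨z, hzp, hzq, h3, h4, _⟩ := hWd_spec α h
    rw [hK3 z hzp hzq α hαΔ, h4] at h3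
    exact h3 rfl
  have hWd_val : ∀ α z, z ∈ sdom p → z ∈ sdom q → app q z α ≠ none → app p z α = none →
      Wd α = app q z α := by
    intro α z hzp hzq h1 h2
    have hex : ∃ z, z ∈ sdom p ∧ z ∈ sdom q ∧ app q z α ≠ none ∧ app p z α = none :=
      ⟨z, hzp, hzq, h1, h2⟩
    have hαΔ : α ∉ Δ := by
      intro hαΔ
      rw [hK3 z hzp hzq α hαΔ, h2] at h1
      exact h1 rfl
    obtain ⟨h1', h2', h3', h4'⟩ := hex.choose_spec
    rw [hWdd]
    simp only [dif_pos hex]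
    exact hK5 _ z h1' h2' hzp hzq α hαΔ h3' h1
  -- the amalgamated condition
  set rf : Set X → X → Option κ.ord.ToType := fun z α =>
    if app p z α ≠ none then app p z α
    else if app q z α ≠ none then app q z α
    else if α ∈ z then Wd α else none with hrfd
  set r : Set X → Option (X → Option κ.ord.ToType) := fun z =>
    if p z ≠ none ∨ q z ≠ none then some (rf z) else none with hrd
  have hrf_p : ∀ z α, app p z α ≠ none → rf z α = app p z α := by
    intro z α h; rw [hrfd]; simp only [if_pos h]
  have hrf_q : ∀ z α, app p z α = none → app q z α ≠ none → rf z α = app q z α := by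
    intro z α h1 h2; rw [hrfd]
    simp only [if_neg (not_not_intro h1), if_pos h2]
  have hrf_e : ∀ z α, app p z α = none → app q z α = none →
      rf z α = if α ∈ z then Wd α else none := by
    intro z α h1 h2; rw [hrfd]
    simp only [if_neg (not_not_intro h1), if_neg (not_not_intro h2)]
  have hrval : ∀ z f, r z = some f → f = rf z ∧ (p z ≠ none ∨ q z ≠ none) := by
    intro z f h
    rw [hrd] at h
    by_cases hc : p z ≠ none ∨ q z ≠ none
    · simp only [if_pos hc] at h
      exact ⟨(Option.some.inj h).symm, hc⟩
    · simp only [if_neg hc] at h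
      exact nomatch h
  have hr_some : ∀ z, (p z ≠ none ∨ q z ≠ none) → r z = some (rf z) := by
    intro z hc; rw [hrd]; exact if_pos hc
  -- CondLE r p
  have hLEp : CondLE r p := by
    refine ⟨?_, ?_, ?_⟩
    · intro z hz
      rw [hr_some z (Or.inl hz)]
      exact fun hc => nomatch hc
    · intro z f g hrz hpz x hgx
      have hf := (hrval z f hrz).1
      have happ : app p z x = g x := by rw [app_eq hpz]
      rw [hf, hrf_p z x (by rw [happ]; exact hgx), happ]
    · intro z₀ z₁ g₀ g₁ f₀ f₁ α hp0 hp1 hα0 hα1 hg0 hg1 hr0 hr1 hf0ne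
      have hf₀ := (hrval _ _ hr0).1
      have hf₁ := (hrval _ _ hr1).1
      have ha0 : app p z₀ α = none := by rw [app_eq hp0]; exact hg0
      have ha1 : app p z₁ α = none := by rw [app_eq hp1]; exact hg1
      have hlem : ∀ z₂, p z₂ ≠ none → app p z₂ α = none → α ∈ z₂ → rf z₂ α = Wd α := by
        intro z₂ hz₂ hpa hαz
        by_cases hq2 : app q z₂ α = none
        · rw [hrf_e _ _ hpa hq2, if_pos hαz]
        · rw [hrf_q _ _ hpa hq2]
          exact (hWd_val α z₂ hz₂ (ne_none_of_app hq2) hq2 hpa).symm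
      rw [hf₀, hf₁, hlem z₀ (by rw [hp0]; exact fun hc => nomatch hc) ha0 hα0,
        hlem z₁ (by rw [hp1]; exact fun hc => nomatch hc) ha1 hα1]
  -- CondLE r q
  have hLEq : CondLE r q := by
    refine ⟨?_, ?_, ?_⟩
    · intro z hz
      rw [hr_some z (Or.inr hz)]
      exact fun hc => nomatch hc
    · intro z f g hrz hqz x hgx
      have hf := (hrval z f hrz).1
      have haq : app q z x = g x := by rw [app_eq hqz]
      by_cases hpx : app p z x = none
      · rw [hf, hrf_q z x hpx (by rw [haq]; exact hgx), haq]
      · have hzq : z ∈ sdom q := by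
          simp only [sdom, mem_setOf_eq, hqz]
          exact fun hc => nomatch hc
        have hxΔ : x ∈ Δ := hPQ z hzq x hpx
        have hzp : z ∈ sdom p := ne_none_of_app hpx
        have hqp := hK3 z hzp hzq x hxΔ
        rw [hf, hrf_p z x hpx, ← hqp, haq]
    · intro z₀ z₁ g₀ g₁ f₀ f₁ α hq0 hq1 hα0 hα1 hg0 hg1 hr0 hr1 hf0ne
      have hf₀ := (hrval _ _ hr0).1
      have hf₁ := (hrval _ _ hr1).1
      have ha0 : app q z₀ α = none := by rw [app_eq hq0]; exact hg0
      have ha1 : app q z₁ α = none := by rw [app_eq hq1]; exact hg1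
      have hlem : ∀ z₂, q z₂ ≠ none → app q z₂ α = none → α ∈ z₂ → rf z₂ α = Wd α := by
        intro z₂ hz₂ hqa hαz
        have hzq2 : z₂ ∈ sdom q := hz₂
        have hpa : app p z₂ α = none := by
          by_contra hc
          have hαΔ : α ∈ Δ := hPQ z₂ hzq2 α hc
          have := hK3 z₂ (ne_none_of_app hc) hzq2 α hαΔ
          rw [hqa] at this
          exact hc this.symm
        rw [hrf_e _ _ hpa hqa, if_pos hαz]
      rw [hf₀, hf₁, hlem z₀ (by rw [hq0]; exact fun hc => nomatch hc) ha0 hα0,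
        hlem z₁ (by rw [hq1]; exact fun hc => nomatch hc) ha1 hα1]
  -- CondOK r
  have hpd : ∀ (c : Set X → Option (X → Option κ.ord.ToType)), CondOK κ c → ∀ z,
      #(pdom (app c z)) < κ := by
    intro c hOK z
    by_cases hz : c z = none
    · have : pdom (app c z) = (∅ : Set X) := by
        ext x
        simp [pdom, app, hz]
      rw [this, Cardinal.mk_emptyCollection]
      exact aleph0_pos.trans_le hκ.aleph0_le
    · exact (app_small hOK hz).2.2.1
  have hOKr : CondOK κ r := by
    constructor
    · have hrdom : {z | r z ≠ none} = sdom p ∪ sdom q := by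
        ext z
        simp only [mem_setOf_eq, mem_union]
        constructor
        · intro h
          by_contra hc
          push_neg at hc
          rw [hrd] at h
          have : ¬ (p z ≠ none ∨ q z ≠ none) := by
            push_neg
            exact ⟨not_not.mp (fun hn => hc.1 hn), not_not.mp (fun hn => hc.2 hn)⟩
          simp only [if_neg this] at h
          exact h rfl
        · intro h
          rw [hr_some z h]
          exact fun hc => nomatch hc
      rw [hrdom]
      exact (Cardinal.mk_union_le _ _).trans_lt
        (Cardinal.add_lt_of_lt hκ.aleph0_le (sdom_lt hpOK) (sdom_lt hqOK))
    · intro z f hrz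
      obtain ⟨hf, hc⟩ := hrval z f hrz
      have hzκ : #z ≤ κ := by
        rcases hc with hz | hz
        · obtain ⟨g, hg⟩ := Option.ne_none_iff_exists'.mp hz
          exact (hpOK.2 z g hg).1
        · obtain ⟨g, hg⟩ := Option.ne_none_iff_exists'.mp hz
          exact (hqOK.2 z g hg).1
      -- source analysis
      have hsrc : ∀ w, rf z w ≠ none →
          (app p z w ≠ none ∧ rf z w = app p z w) ∨
          (app p z w = none ∧ app q z w ≠ none ∧ rf z w = app q z w) ∨
          (app p z w = none ∧ app q z w = none ∧ w ∈ z ∧ rf z w = Wd w ∧ Wd w ≠ none) := by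
        intro w hw
        by_cases h1 : app p z w = none
        · by_cases h2 : app q z w = none
          · right; right
            have he := hrf_e z w h1 h2
            have hwz : w ∈ z := by
              by_contra hcz
              rw [he, if_neg hcz] at hw
              exact hw rfl
            rw [he, if_pos hwz] at hw
            exact ⟨h1, h2, hwz, by rw [he, if_pos hwz], hw⟩
          · right; left
            exact ⟨h1, h2, hrf_q z w h1 h2⟩
        · left
          exact ⟨h1, hrf_p z w h1⟩
      refine ⟨hzκ, ?_, ?_, ?_⟩
      · -- pdom f ⊆ z
        intro x hx
        rw [hf] at hx
        rcases hsrc x hx with ⟨h1, _⟩ | ⟨_, h2, _⟩ | ⟨_, _, h3, _, _⟩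
        · exact mem_z_of_app hpOK h1
        · exact mem_z_of_app hqOK h2
        · exact h3
      · -- small domain
        have hsub : pdom f ⊆ pdom (app p z) ∪ pdom (app q z) ∪ suppD q := by
          intro x hx
          rw [hf] at hx
          rcases hsrc x hx with ⟨h1, _⟩ | ⟨_, h2, _⟩ | ⟨_, _, _, _, h5⟩
          · exact Or.inl (Or.inl h1)
          · exact Or.inl (Or.inr h2)
          · obtain ⟨z', _, _, hq', _, hWeq⟩ := hWd_spec x h5
            exact Or.inr (mem_suppD_of_app hq')
        refine (Cardinal.mk_le_mk_of_subset hsub).trans_lt ?_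
        refine (Cardinal.mk_union_le _ _).trans_lt
          (Cardinal.add_lt_of_lt hκ.aleph0_le ?_ (suppD_lt hκ hqOK))
        exact (Cardinal.mk_union_le _ _).trans_lt
          (Cardinal.add_lt_of_lt hκ.aleph0_le (hpd p hpOK z) (hpd q hqOK z))
      · -- injectivity
        rw [hf]
        intro x y hx hxy
        have hy : rf z y ≠ none := by rw [← hxy]; exact hx
        rcases hsrc x hx with ⟨hx1, hx2⟩ | ⟨hx1, hx2, hx3⟩ | ⟨hx1, hx2, hx3, hx4, hx5⟩ <;>
          rcases hsrc y hy with ⟨hy1, hy2⟩ | ⟨hy1, hy2, hy3⟩ | ⟨hy1, hy2, hy3, hy4, hy5⟩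
        · -- P P
          have hzp : z ∈ sdom p := ne_none_of_app hx1
          exact (app_small hpOK hzp).2.2.2 x y hx1 (by rw [← hx2, ← hy2, hxy])
        · -- P Q
          obtain ⟨γ, hγ⟩ := Option.ne_none_iff_exists'.mp hx1
          have hqy : app q z y = some γ := by rw [← hy3, ← hxy, hx2, hγ]
          have hγΔv : γ ∈ Δv := hVcol hγ hqy
          have := hK4 z (ne_none_of_app hx1) (ne_none_of_app hy2) y γ hqy hγΔv
          rw [hy1] at this
          exact absurd this (fun hc => nomatch hc)
        · -- P E
          obtain ⟨γ, hγ⟩ := Option.ne_none_iff_exists'.mp hx1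
          obtain ⟨z', hz'p, hz'q, hq', hp', hWeq⟩ := hWd_spec y hy5
          have hqy : app q z' y = some γ := by rw [← hWeq, ← hy4, ← hxy, hx2, hγ]
          have hγΔv : γ ∈ Δv := hVcol hγ hqy
          have := hK4 z' hz'p hz'q y γ hqy hγΔv
          rw [hp'] at this
          exact absurd this (fun hc => nomatch hc)
        · -- Q P
          obtain ⟨γ, hγ⟩ := Option.ne_none_iff_exists'.mp hy1
          have hqx : app q z x = some γ := by rw [← hx3, hxy, hy2, hγ]
          have hγΔv : γ ∈ Δv := hVcol hγ hqx
          have := hK4 z (ne_none_of_app hy1) (ne_none_of_app hx2) x γ hqx hγΔv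
          rw [hx1] at this
          exact absurd this (fun hc => nomatch hc)
        · -- Q Q
          have hzq : z ∈ sdom q := ne_none_of_app hx2
          exact (app_small hqOK hzq).2.2.2 x y hx2 (by rw [← hx3, ← hy3, hxy])
        · -- Q E
          obtain ⟨z₁, hz₁p, hz₁q, hq₁, hp₁, hWeq⟩ := hWd_spec y hy5
          have hyΔ : y ∉ Δ := hWd_notΔ y hy5
          have heq : app q z₁ y = app q z x := by rw [← hWeq, ← hy4, ← hxy, hx3]
          exact (hK6 z₁ hz₁p hz₁q z (ne_none_of_app hx2) y x hyΔ hq₁ heq).symm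
        · -- E P
          obtain ⟨γ, hγ⟩ := Option.ne_none_iff_exists'.mp hy1
          obtain ⟨z', hz'p, hz'q, hq', hp', hWeq⟩ := hWd_spec x hx5
          have hqx : app q z' x = some γ := by rw [← hWeq, ← hx4, hxy, hy2, hγ]
          have hγΔv : γ ∈ Δv := hVcol hγ hqx
          have := hK4 z' hz'p hz'q x γ hqx hγΔv
          rw [hp'] at this
          exact absurd this (fun hc => nomatch hc)
        · -- E Q
          obtain ⟨z₁, hz₁p, hz₁q, hq₁, hp₁, hWeq⟩ := hWd_spec x hx5
          have hxΔ : x ∉ Δ := hWd_notΔ x hx5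
          have heq : app q z₁ x = app q z y := by rw [← hWeq, ← hx4, hxy, hy3]
          exact hK6 z₁ hz₁p hz₁q z (ne_none_of_app hy2) x y hxΔ hq₁ heq
        · -- E E
          obtain ⟨z₁, hz₁p, hz₁q, hq₁, hp₁, hWeq₁⟩ := hWd_spec x hx5
          obtain ⟨z₂, hz₂p, hz₂q, hq₂, hp₂, hWeq₂⟩ := hWd_spec y hy5
          have hxΔ : x ∉ Δ := hWd_notΔ x hx5
          have heq : app q z₁ x = app q z₂ y := by
            rw [← hWeq₁, ← hWeq₂, ← hx4, ← hy4, hxy]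
          exact hK6 z₁ hz₁p hz₁q z₂ hz₂q x y hxΔ hq₁ heq
  exact ⟨r, hOKr, hLEp, hLEq⟩

end Amalg

section Main

variable {κ : Cardinal.{u}}

theorem chain_cond (hκ : κ.IsRegular) (hpow : (2 : Cardinal.{u}) ^< κ = κ)
    {A : Set (Set X → Option (X → Option κ.ord.ToType))}
    (hOKA : ∀ p ∈ A, CondOK κ p)
    (hanti : ∀ p ∈ A, ∀ q ∈ A, p ≠ q → ¬ ∃ r, CondOK κ r ∧ CondLE r p ∧ CondLE r q) :
    Cardinal.mk A ≤ κ := by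
  by_contra hA
  push_neg at hA
  have hBle := bigB_le hκ hpow hOKA
  have hAB : ¬ A ⊆ bigB κ A := by
    intro h
    exact absurd ((Cardinal.mk_le_mk_of_subset h).trans hBle) (not_le.mpr hA)
  obtain ⟨p, hpA, hpB⟩ := not_subset.mp hAB
  have hpOK := hOKA p hpA
  set B := bigB κ A with hB
  set Δ : Set X := suppD p ∩ bigY B with hΔd
  set Δv : Set κ.ord.ToType := suppV p ∩ bigV B with hΔvd
  set E : Set (Set X × (X → Option κ.ord.ToType)) :=
    (fun z => (z, pres (app p z) Δ)) '' (sdom p ∩ bigZ B) with hEd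
  set d : Set X × Set κ.ord.ToType × Set (Set X × (X → Option κ.ord.ToType)) :=
    (Δ, Δv, E) with hdd
  have hd2 : #Δ < κ :=
    (Cardinal.mk_le_mk_of_subset inter_subset_left).trans_lt (suppD_lt hκ hpOK)
  have hd3 : #Δv < κ :=
    (Cardinal.mk_le_mk_of_subset inter_subset_left).trans_lt (suppV_lt hκ hpOK)
  have hd4 : #E < κ :=
    Cardinal.mk_image_le.trans_lt
      ((Cardinal.mk_le_mk_of_subset inter_subset_left).trans_lt (sdom_lt hpOK))
  have hd5 : ∀ zf ∈ E, zf.1 ∈ bigZ B ∧ pdom zf.2 ⊆ Δ := by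
    rintro zf ⟨z, ⟨hzp, hzB⟩, rfl⟩
    refine ⟨hzB, ?_⟩
    intro x hx
    by_contra hc
    exact hx (if_neg hc)
  have hgood : gfun A d ∈ B := by
    refine gfun_mem_bigB hκ d ?_ hd2 hd3 hd4 hd5
    exact inter_subset_right
  have hRp : Rq A d p := by
    refine ⟨hpA, ?_, ?_, ?_, ?_⟩
    · rintro zf ⟨z, ⟨hzp, hzB⟩, rfl⟩ _ α hα
      show app p z α = pres (app p z) Δ α
      rw [show pres (app p z) Δ α = app p z α from if_pos hα]
    · rintro zf ⟨z, ⟨hzp, hzB⟩, rfl⟩ _ β γ hβ hγ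
      have hβΔ : β ∈ Δ := by
        refine ⟨mem_suppD_of_app (by rw [hβ]; exact fun hc => nomatch hc), ?_⟩
        exact subset_bigY_of_mem_bigZ hzB
          (mem_z_of_app hpOK (by rw [hβ]; exact fun hc => nomatch hc))
      show pres (app p z) Δ β = some γ
      rw [show pres (app p z) Δ β = app p z β from if_pos hβΔ]
      exact hβ
    · rintro zf ⟨z, ⟨hzp, hzB⟩, rfl⟩ zf' ⟨z', ⟨hz'p, hz'B⟩, rfl⟩ _ _ α hαΔ h1 _
      exact absurd (⟨mem_suppD_of_app h1,
        subset_bigY_of_mem_bigZ hzB (mem_z_of_app hpOK h1)⟩ : α ∈ Δ) hαΔ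
    · rintro zf ⟨z, ⟨hzp, hzB⟩, rfl⟩ _ z' _ α β hαΔ h1 _
      exact absurd (⟨mem_suppD_of_app h1,
        subset_bigY_of_mem_bigZ hzB (mem_z_of_app hpOK h1)⟩ : α ∈ Δ) hαΔ
  have hq : Rq A d (gfun A d) := by
    have hex : ∃ q', Rq A d q' := ⟨p, hRp⟩
    rw [gfun, dif_pos hex]
    exact hex.choose_spec
  have hqA : gfun A d ∈ A := hq.1
  have hqOK := hOKA _ hqA
  have hne : p ≠ gfun A d := fun h => hpB (h ▸ hgood)
  have ham := amalg hκ hpOK hqOK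
    (Y := bigY B) (W := bigV B) (Δ := Δ) (Δv := Δv) (E := E)
    (fun z hz => subset_bigY_of_mem_bigZ (sdom_subset_bigZ hgood hz))
    (suppD_subset_bigY hgood)
    (suppV_subset_bigV hgood)
    (fun α h1 h2 => ⟨h1, h2⟩)
    (fun γ h1 h2 => ⟨h1, h2⟩)
    (fun z hzp hzq => ⟨z, ⟨hzp, sdom_subset_bigZ hgood hzq⟩, rfl⟩)
    hq
  exact hanti p hpA (gfun A d) hqA hne ham

end Main

section Trans

variable {K : Type u}

theorem condLE_trans {p q r : Set X → Option (X → Option K)}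
    (hpq : CondLE p q) (hqr : CondLE q r) : CondLE p r := by
  obtain ⟨h1, h2, h3⟩ := hpq
  obtain ⟨g1, g2, g3⟩ := hqr
  refine ⟨fun z hz => h1 z (g1 z hz), ?_, ?_⟩
  · intro z f g hpz hrz x hgx
    obtain ⟨h, hqz⟩ := Option.ne_none_iff_exists'.mp (g1 z (by simp [hrz]))
    rw [h2 z f h hpz hqz x, g2 z h g hqz hrz x hgx]
    rw [g2 z h g hqz hrz x hgx]; exact hgx
  · intro z₀ z₁ g₀ g₁ f₀ f₁ α hr0 hr1 hαz0 hαz1 hg0 hg1 hp0 hp1 hf0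
    obtain ⟨h₀, hq0⟩ := Option.ne_none_iff_exists'.mp (g1 z₀ (by simp [hr0]))
    obtain ⟨h₁, hq1⟩ := Option.ne_none_iff_exists'.mp (g1 z₁ (by simp [hr1]))
    by_cases hh0 : h₀ α = none
    · by_cases hh1 : h₁ α = none
      · exact h3 z₀ z₁ h₀ h₁ f₀ f₁ α hq0 hq1 hαz0 hαz1 hh0 hh1 hp0 hp1 hf0
      · exact absurd (g3 z₁ z₀ g₁ g₀ h₁ h₀ α hr1 hr0 hαz1 hαz0 hg1 hg0 hq1 hq0 hh1) (by
          intro h; rw [h] at hh0; exact hh1 hh0)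
    · have e1 : h₁ α = h₀ α := g3 z₀ z₁ g₀ g₁ h₀ h₁ α hr0 hr1 hαz0 hαz1 hg0 hg1 hq0 hq1 hh0
      have e2 : f₀ α = h₀ α := h2 z₀ f₀ h₀ hp0 hq0 α hh0
      have e3 : f₁ α = h₁ α := h2 z₁ f₁ h₁ hp1 hq1 α (by rw [e1]; exact hh0)
      rw [e3, e1, e2]


end Trans

section Closure

theorem chain_bound (κ : Cardinal.{u}) (hκ : κ.IsRegular) {δ : Ordinal.{u}} (hδ : δ < κ.ord)
    (c : δ.ToType → {p : Set X → Option (X → Option κ.ord.ToType) // CondOK κ p})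
    (hc : ∀ i j, i < j → CondLE (c j).1 (c i).1) :
    ∃ p, CondOK κ p ∧ ∀ i, CondLE p (c i).1 := by
  set F : δ.ToType → Set X → Option (X → Option κ.ord.ToType) := fun i => (c i).1 with hF
  have hT : #δ.ToType < κ := by
    rw [Cardinal.mk_toType]; exact Cardinal.lt_ord.mp hδ
  -- extension along the chain
  have hext : ∀ {i j : δ.ToType} (_ : i ≤ j) (z : Set X) (x : X),
      app (F i) z x ≠ none → app (F j) z x = app (F i) z x := by
    intro i j hij z x hx
    rcases eq_or_lt_of_le hij with rfl | hlt
    · rfl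
    · have hiz : F i z ≠ none := ne_none_of_app hx
      obtain ⟨g, hg⟩ := Option.ne_none_iff_exists'.mp hiz
      have hjz : F j z ≠ none := (hc i j hlt).1 z hiz
      obtain ⟨f, hf⟩ := Option.ne_none_iff_exists'.mp hjz
      rw [app_eq hf, app_eq hg]
      rw [app_eq hg] at hx
      exact (hc i j hlt).2.1 z f g hf hg x hx
  classical
  set U : Set X → X → Option κ.ord.ToType := fun z x =>
    if h : ∃ i, app (F i) z x ≠ none then app (F h.choose) z x else none with hU
  have hUeq : ∀ (i) (z x), app (F i) z x ≠ none → U z x = app (F i) z x := by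
    intro i z x hx
    have h : ∃ i, app (F i) z x ≠ none := ⟨i, hx⟩
    rw [hU]; simp only [dif_pos h]
    have hj := h.choose_spec
    set j := h.choose
    have e1 : app (F (max i j)) z x = app (F i) z x := hext (le_max_left i j) z x hx
    have e2 : app (F (max i j)) z x = app (F j) z x := hext (le_max_right i j) z x hj
    rw [← e2, e1]
  set p : Set X → Option (X → Option κ.ord.ToType) := fun z =>
    if _ : ∃ i, F i z ≠ none then some (fun x => U z x) else none with hp
  have hpdom : ∀ z, p z ≠ none ↔ ∃ i, F i z ≠ none := by
    intro z; rw [hp]; by_cases h : ∃ i, F i z ≠ none <;> simp [h]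
  have hpval : ∀ z f, p z = some f → f = fun x => U z x := by
    intro z f h; rw [hp] at h
    by_cases hz : ∃ i, F i z ≠ none
    · simp only [dif_pos hz] at h; exact (Option.some.inj h).symm
    · simp only [dif_neg hz] at h; exact absurd h (by simp)
  have hUwit : ∀ z x, U z x ≠ none → ∃ i, app (F i) z x ≠ none ∧ U z x = app (F i) z x := by
    intro z x hx; rw [hU] at hx
    by_cases h : ∃ i, app (F i) z x ≠ none
    · exact ⟨h.choose, h.choose_spec, by rw [hU]; simp [dif_pos h]⟩
    · simp only [dif_neg h] at hx; exact absurd rfl hx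
  have hOK : CondOK κ p := by
    constructor
    · have hds : {z | p z ≠ none} = ⋃ i, {z | F i z ≠ none} := by
        ext z; simp only [mem_setOf_eq, mem_iUnion, hpdom z]
      rw [hds, Cardinal.card_iUnion_lt_iff_forall_of_isRegular hκ hT]
      intro i; exact (c i).2.1
    · intro z f hz
      obtain ⟨i0, hi0⟩ := (hpdom z).mp (by simp [hz])
      obtain ⟨g0, hg0⟩ := Option.ne_none_iff_exists'.mp hi0
      have hfU := hpval z f hz
      obtain ⟨hzκ, _, _, _⟩ := (c i0).2.2 z g0 hg0
      have hfx : ∀ x, f x = U z x := by intro x; rw [hfU]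
      refine ⟨hzκ, ?_, ?_, ?_⟩
      · intro x hx
        obtain ⟨j, hj, _⟩ := hUwit z x (by rw [← hfx x]; exact hx)
        obtain ⟨g, hg⟩ := Option.ne_none_iff_exists'.mp (ne_none_of_app hj)
        rw [app_eq hg] at hj
        exact ((c j).2.2 z g hg).2.1 hj
      · have hsub : pdom f ⊆ ⋃ i, pdom (app (F i) z) := by
          intro x hx
          obtain ⟨j, hj, _⟩ := hUwit z x (by rw [← hfx x]; exact hx)
          exact mem_iUnion.mpr ⟨j, hj⟩
        refine lt_of_le_of_lt (mk_le_mk_of_subset hsub) ?_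
        rw [Cardinal.card_iUnion_lt_iff_forall_of_isRegular hκ hT]
        intro i
        by_cases hiz : F i z = none
        · have he : pdom (app (F i) z) = (∅ : Set X) := by
            ext x; simp [pdom, app, hiz]
          rw [he]; simpa using aleph0_pos.trans_le hκ.aleph0_le
        · obtain ⟨g, hg⟩ := Option.ne_none_iff_exists'.mp hiz
          rw [app_eq hg]; exact ((c i).2.2 z g hg).2.2.1
      · intro x y hx hxy
        rw [hfx x] at hx hxy; rw [hfx y] at hxy
        obtain ⟨i, hi, hUi⟩ := hUwit z x hx
        obtain ⟨j, hj, hUj⟩ := hUwit z y (by rw [← hxy]; exact hx)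
        have e1 : app (F (max i j)) z x = U z x := by
          rw [hext (le_max_left i j) z x hi, ← hUi]
        have e2 : app (F (max i j)) z y = U z y := by
          rw [hext (le_max_right i j) z y hj, ← hUj]
        obtain ⟨g, hg⟩ := Option.ne_none_iff_exists'.mp
          (ne_none_of_app (x := x) (by rw [e1]; exact hx))
        have hgx : g x ≠ none := by rw [← app_eq hg, e1]; exact hx
        have hgxy : g x = g y := by rw [← app_eq hg, e1, e2, hxy]
        exact ((c (max i j)).2.2 z g hg).2.2.2 x y hgx hgxy
  refine ⟨p, hOK, ?_⟩
  intro i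
  refine ⟨fun z hz => (hpdom z).mpr ⟨i, hz⟩, ?_, ?_⟩
  · intro z f g hpz hiz x hgx
    have hax : app (F i) z x = g x := by rw [app_eq hiz]
    rw [hpval z f hpz]
    show U z x = g x
    rw [hUeq i z x (by rw [hax]; exact hgx), hax]
  · intro z₀ z₁ g₀ g₁ f₀ f₁ α h0 h1 ha0 ha1 hg0 hg1 hp0 hp1 hf0
    have hf0U := hpval _ _ hp0
    have hf1U := hpval _ _ hp1
    have hU0 : U z₀ α ≠ none := by rw [hf0U] at hf0; exact hf0
    obtain ⟨j, hj, hUj⟩ := hUwit z₀ α hU0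
    have hij : i < j := by
      by_contra hji
      push_neg at hji
      have he := hext hji z₀ α hj
      rw [app_eq h0] at he
      exact hj (by rw [← he, hg0])
    have hCL := hc i j hij
    obtain ⟨f₀', hf0'⟩ := Option.ne_none_iff_exists'.mp (ne_none_of_app hj)
    obtain ⟨f₁', hf1'⟩ := Option.ne_none_iff_exists'.mp (hCL.1 z₁ (by simp [h1]))
    have hj' : f₀' α ≠ none := by rw [← app_eq hf0']; exact hj
    have key : f₁' α = f₀' α :=
      hCL.2.2 z₀ z₁ g₀ g₁ f₀' f₁' α h0 h1 ha0 ha1 hg0 hg1 hf0' hf1' hj'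
    rw [hf1U, hf0U]
    show U z₁ α = U z₀ α
    have e1 : U z₁ α = app (F j) z₁ α :=
      hUeq j z₁ α (by rw [app_eq hf1', key]; exact hj')
    rw [e1, app_eq hf1', key, ← app_eq hf0', ← hUj]


end Closure

/-- The forcing of partial local injections is transitively ordered, `< κ`-closed,
and has the `κ⁺`-chain condition. -/
theorem stmt14 {X : Type u} (κ : Cardinal.{u}) (hκ : κ.IsRegular)
    (hpow : (2 : Cardinal.{u}) ^< κ = κ) (hX : κ ≤ #X) :
    (∀ p q r : Set X → Option (X → Option κ.ord.ToType),
      CondOK κ p → CondOK κ q → CondOK κ r →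
      CondLE p q → CondLE q r → CondLE p r) ∧
    (∀ δ : Ordinal.{u}, δ < κ.ord →
      ∀ c : δ.ToType → {p : Set X → Option (X → Option κ.ord.ToType) // CondOK κ p},
        (∀ i j, i < j → CondLE (c j).1 (c i).1) →
        ∃ p, CondOK κ p ∧ ∀ i, CondLE p (c i).1) ∧
    (∀ A : Set {p : Set X → Option (X → Option κ.ord.ToType) // CondOK κ p},
      (∀ p ∈ A, ∀ q ∈ A, p ≠ q →
        ¬ ∃ r, CondOK κ r ∧ CondLE r p.1 ∧ CondLE r q.1) → #A ≤ κ) := by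
  refine ⟨?_, ?_, ?_⟩
  · intro p q r _ _ _ hpq hqr
    exact condLE_trans hpq hqr
  · intro δ hδ c hc
    exact chain_bound κ hκ hδ c hc
  · intro A hanti
    have hinj : Function.Injective
        (fun p : {p : Set X → Option (X → Option κ.ord.ToType) // CondOK κ p} => p.1) :=
      fun a b h => Subtype.ext h
    have hmk : #(Subtype.val '' A) = #A := Cardinal.mk_image_eq hinj
    rw [← hmk]
    apply chain_cond hκ hpow
    · rintro p ⟨⟨p', hp'⟩, _, rfl⟩
      exact hp'
    · rintro p ⟨pp, hpp, rfl⟩ q ⟨qq, hqq, rfl⟩ hne hex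
      exact hanti pp hpp qq hqq (fun h => hne (congrArg Subtype.val h)) hex
end ForestPaper
end
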